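/- arXiv:2006.01931 — 6 statements merged into one kernel-verified Lean document; each statement's English description precedes it below -/
import Mathlib

section
/- Let α be an irrational real number and n ≥ 2 an integer. Then the n-step partition P_n is obtained from the (n−1)-step partition P_{n−1} by subdividing exactly one subinterval of P_{n−1} into two subintervals; consequently the shortest subinterval length of P_{n−1} is at least the shortest subinterval length of P_n, the longest subinterval length of P_{n−1} is at most twice the longest subinterval length of P_n, and hence (shortest length of P_{n−1})/(longest length of P_{n−1}) ≥ (1/2)·(shortest length of P_n)/(longest length of P_n). -/
/-- The points `{0, α, 2α, …, (n−1)α}` reduced mod 1: the endpoints of the `n`-step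
partition of `[0,1)`. -/
def pts (α : ℝ) (n : ℕ) : Set ℝ := {x | ∃ k < n, x = Int.fract (k * α)}

/-- The endpoint (in `pts α n ∪ {1}`) immediately to the right of `p`. -/
noncomputable def nextPt (α : ℝ) (n : ℕ) (p : ℝ) : ℝ :=
  sInf ((pts α n ∪ {1}) ∩ Set.Ioi p)

/-- The subintervals (cells) of the `n`-step partition of `[0,1)`. -/
def cells (α : ℝ) (n : ℕ) : Set (Set ℝ) :=
  {I | ∃ p ∈ pts α n, I = Set.Ico p (nextPt α n p)}

/-- The set of lengths of the subintervals of the `n`-step partition. -/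
def gaps (α : ℝ) (n : ℕ) : Set ℝ :=
  {g | ∃ p ∈ pts α n, g = nextPt α n p - p}

namespace StepPartitionAux

lemma pts_finite (α : ℝ) (n : ℕ) : (pts α n).Finite := by
  apply Set.Finite.subset (Set.Finite.image (fun k : ℕ => Int.fract (k * α))
    (Set.finite_Iio n))
  rintro x ⟨k, hk, rfl⟩
  exact ⟨k, hk, rfl⟩

lemma pts_nonneg {α : ℝ} {n : ℕ} {x : ℝ} (hx : x ∈ pts α n) : 0 ≤ x := by
  obtain ⟨k, _, rfl⟩ := hx; exact Int.fract_nonneg _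

lemma pts_lt_one {α : ℝ} {n : ℕ} {x : ℝ} (hx : x ∈ pts α n) : x < 1 := by
  obtain ⟨k, _, rfl⟩ := hx; exact Int.fract_lt_one _

lemma zero_mem_pts (α : ℝ) {n : ℕ} (hn : 1 ≤ n) : (0 : ℝ) ∈ pts α n :=
  ⟨0, hn, by simp⟩

lemma pts_mono (α : ℝ) {m n : ℕ} (h : m ≤ n) : pts α m ⊆ pts α n := by
  rintro x ⟨k, hk, rfl⟩; exact ⟨k, lt_of_lt_of_le hk h, rfl⟩

/-- The set whose infimum is `nextPt`. -/
def T (α : ℝ) (n : ℕ) (p : ℝ) : Set ℝ := (pts α n ∪ {1}) ∩ Set.Ioi p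

lemma T_finite (α : ℝ) (n : ℕ) (p : ℝ) : (T α n p).Finite :=
  Set.Finite.subset (Set.Finite.union (pts_finite α n) (Set.finite_singleton 1))
    Set.inter_subset_left

lemma T_nonempty {α : ℝ} {n : ℕ} {p : ℝ} (hp : p < 1) : (T α n p).Nonempty :=
  ⟨1, Or.inr rfl, hp⟩

lemma nextPt_mem {α : ℝ} {n : ℕ} {p : ℝ} (hp : p < 1) : nextPt α n p ∈ T α n p :=
  Set.Nonempty.csInf_mem (T_nonempty hp) (T_finite α n p)

lemma lt_nextPt {α : ℝ} {n : ℕ} {p : ℝ} (hp : p < 1) : p < nextPt α n p :=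
  (nextPt_mem (α := α) (n := n) hp).2

lemma nextPt_le {α : ℝ} {n : ℕ} {p x : ℝ} (hx : x ∈ T α n p) : nextPt α n p ≤ x :=
  csInf_le (T_finite α n p).bddBelow hx

lemma nextPt_eq {α : ℝ} {n : ℕ} {p x : ℝ} (h : IsLeast (T α n p) x) :
    nextPt α n p = x := h.csInf_eq

lemma gaps_finite (α : ℝ) (n : ℕ) : (gaps α n).Finite := by
  apply Set.Finite.subset (Set.Finite.image (fun p => nextPt α n p - p) (pts_finite α n))
  rintro g ⟨p, hp, rfl⟩
  exact ⟨p, hp, rfl⟩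

lemma gaps_pos {α : ℝ} {n : ℕ} {g : ℝ} (hg : g ∈ gaps α n) : 0 < g := by
  obtain ⟨p, hp, rfl⟩ := hg
  have := lt_nextPt (α := α) (n := n) (pts_lt_one hp)
  linarith

end StepPartitionAux

open StepPartitionAux Set

/-- For irrational `α` and `n ≥ 2`, the `n`-step partition is obtained from the
`(n−1)`-step partition by subdividing exactly one subinterval into two; consequently the
shortest length does not increase backwards, the longest length of `P_{n−1}` is at most
twice that of `P_n`, and the ratio shortest/longest of `P_{n−1}` is at least half that
of `P_n`. -/
theorem step_partition_refinement (α : ℝ) (hα : Irrational α) (n : ℕ) (hn : 2 ≤ n) :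
    (∃ I J K : Set ℝ,
        cells α (n - 1) \ cells α n = {I} ∧
        cells α n \ cells α (n - 1) = {J, K} ∧
        J ≠ K ∧ Disjoint J K ∧ I = J ∪ K) ∧
      sInf (gaps α n) ≤ sInf (gaps α (n - 1)) ∧
      sSup (gaps α (n - 1)) ≤ 2 * sSup (gaps α n) ∧
      (1 / 2) * (sInf (gaps α n) / sSup (gaps α n)) ≤
        sInf (gaps α (n - 1)) / sSup (gaps α (n - 1)) := by
  set m := n - 1 with hm
  have hm1 : 1 ≤ m := by omega
  have hnm : n = m + 1 := by omega
  set q : ℝ := Int.fract ((m : ℝ) * α) with hq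
  -- pts α n = insert q (pts α m)
  have hpts : pts α n = insert q (pts α m) := by
    ext x
    constructor
    · rintro ⟨k, hk, rfl⟩
      rcases Nat.lt_succ_iff_lt_or_eq.1 (hnm ▸ hk) with h | rfl
      · exact Or.inr ⟨k, h, rfl⟩
      · exact Or.inl rfl
    · rintro (rfl | ⟨k, hk, rfl⟩)
      · exact ⟨m, by omega, rfl⟩
      · exact ⟨k, by omega, rfl⟩
  -- q is a new point
  have hqnot : q ∉ pts α m := by
    rintro ⟨k, hk, hkq⟩
    obtain ⟨z, hz⟩ := Int.fract_eq_fract.1 hkq.symm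
    have hkm : (k : ℝ) < (m : ℝ) := by exact_mod_cast hk
    have hne : (m : ℝ) - k ≠ 0 := by linarith
    have hx : α = (-z : ℝ) / ((m : ℝ) - (k : ℝ)) := by
      field_simp
      linear_combination -hz
    exact hα ⟨(-z : ℚ) / ((m : ℚ) - (k : ℚ)), by rw [hx]; push_cast; ring⟩
  have hq0 : 0 < q := by
    have h0 : (0 : ℝ) ∈ pts α m := zero_mem_pts α hm1
    have hqne : q ≠ 0 := by intro h; rw [h] at hqnot; exact hqnot h0
    exact lt_of_le_of_ne (Int.fract_nonneg _) (Ne.symm hqne)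
  have hq1 : q < 1 := Int.fract_lt_one _
  -- p₀ : the largest point of pts α m below q
  have hBne : (pts α m ∩ Set.Iio q).Nonempty := ⟨0, zero_mem_pts α hm1, hq0⟩
  have hBfin : (pts α m ∩ Set.Iio q).Finite :=
    (pts_finite α m).subset Set.inter_subset_left
  set p₀ : ℝ := sSup (pts α m ∩ Set.Iio q) with hp₀def
  have hp₀mem : p₀ ∈ pts α m ∩ Set.Iio q := Set.Nonempty.csSup_mem hBne hBfin
  have hp₀pts : p₀ ∈ pts α m := hp₀mem.1
  have hp₀q : p₀ < q := hp₀mem.2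
  have hp₀max : ∀ x ∈ pts α m, x < q → x ≤ p₀ := fun x hx hxq =>
    le_csSup hBfin.bddAbove ⟨hx, hxq⟩
  set t : ℝ := nextPt α m p₀ with ht
  have hp₀t : p₀ < t := lt_nextPt (pts_lt_one hp₀pts)
  have htmem : t ∈ T α m p₀ := nextPt_mem (pts_lt_one hp₀pts)
  have hqt : q < t := by
    rcases lt_trichotomy t q with h | h | h
    · exfalso
      rcases htmem.1 with h1 | h1
      · exact absurd (hp₀max t h1 h) (not_le.2 hp₀t)
      · simp only [Set.mem_singleton_iff] at h1; linarith
    · exfalso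
      rcases htmem.1 with h1 | h1
      · exact hqnot (h ▸ h1)
      · simp only [Set.mem_singleton_iff] at h1; linarith
    · exact h
  -- T relation: T α n p = T α m p ∪ ({q} ∩ Ioi p)
  have hTn : ∀ p : ℝ, T α n p = T α m p ∪ ({q} ∩ Set.Ioi p) := by
    intro p
    simp only [T, hpts, Set.insert_union, Set.insert_inter_distrib]
    ext x
    simp only [Set.mem_inter_iff, Set.mem_insert_iff, Set.mem_union, Set.mem_singleton_iff,
      Set.mem_Ioi]
    tauto
  -- Claim B : nextPt α n p₀ = q
  have hB : nextPt α n p₀ = q := by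
    apply nextPt_eq
    constructor
    · exact ⟨Or.inl (hpts ▸ Set.mem_insert q _), hp₀q⟩
    · rintro y ⟨hy1, hy2⟩
      rw [hpts] at hy1
      rcases hy1 with (rfl | hy) | hy1
      · exact le_refl _
      · by_contra h
        exact absurd (hp₀max y hy (not_le.1 h)) (not_le.2 hy2)
      · simp only [Set.mem_singleton_iff] at hy1; linarith
  -- Claim C : nextPt α n q = t
  have hC : nextPt α n q = t := by
    apply nextPt_eq
    constructor
    · refine ⟨?_, hqt⟩
      rcases htmem.1 with h | h
      · exact Or.inl (hpts ▸ Set.mem_insert_of_mem q h)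
      · exact Or.inr h
    · rintro y ⟨hy1, hy2⟩
      rw [hpts] at hy1
      rcases hy1 with (rfl | hy) | hy1
      · exact absurd hy2 (lt_irrefl q)
      · exact nextPt_le ⟨Or.inl hy, lt_trans hp₀q hy2⟩
      · exact nextPt_le ⟨Or.inr hy1, lt_trans hp₀q hy2⟩
  -- Claim A : for p ∈ pts α m, p ≠ p₀, nextPt α n p = nextPt α m p
  have hA : ∀ p ∈ pts α m, p ≠ p₀ → nextPt α n p = nextPt α m p := by
    intro p hp hpne
    apply nextPt_eq
    have hp1 : p < 1 := pts_lt_one hp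
    have hmem := nextPt_mem (α := α) (n := m) hp1
    constructor
    · refine ⟨?_, hmem.2⟩
      rcases hmem.1 with h | h
      · exact Or.inl (hpts ▸ Set.mem_insert_of_mem q h)
      · exact Or.inr h
    · rintro y ⟨hy1, hy2⟩
      rw [hpts] at hy1
      rcases hy1 with (rfl | hy) | hy1
      · -- y = q, p < q, so p < p₀ and nextPt α m p ≤ p₀ < q
        have hpp₀ : p < p₀ := lt_of_le_of_ne (hp₀max p hp hy2) hpne
        have : nextPt α m p ≤ p₀ := nextPt_le ⟨Or.inl hp₀pts, hpp₀⟩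
        linarith
      · exact nextPt_le ⟨Or.inl hy, hy2⟩
      · exact nextPt_le ⟨Or.inr hy1, hy2⟩
  -- the three intervals
  set I : Set ℝ := Set.Ico p₀ t with hI
  set J : Set ℝ := Set.Ico p₀ q with hJ
  set K : Set ℝ := Set.Ico q t with hK
  have hqn : q ∈ pts α n := hpts ▸ Set.mem_insert q _
  -- cells claims
  have hcells1 : cells α m \ cells α n = {I} := by
    ext X
    simp only [Set.mem_diff, Set.mem_singleton_iff]
    constructor
    · rintro ⟨⟨p, hp, rfl⟩, hX⟩
      by_cases hpe : p = p₀
      · subst hpe; rfl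
      · exfalso
        exact hX ⟨p, hpts ▸ Set.mem_insert_of_mem q hp, by rw [hA p hp hpe]⟩
    · rintro rfl
      refine ⟨⟨p₀, hp₀pts, rfl⟩, ?_⟩
      rintro ⟨p, hp, hpI⟩
      have hplt : p < nextPt α n p := lt_nextPt (pts_lt_one hp)
      rw [Set.Ico_eq_Ico_iff (Or.inr hplt)] at hpI
      obtain ⟨rfl, h2⟩ := hpI
      rw [hB] at h2
      linarith
  have hcells2 : cells α n \ cells α m = {J, K} := by
    ext X
    simp only [Set.mem_diff, Set.mem_insert_iff, Set.mem_singleton_iff]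
    constructor
    · rintro ⟨⟨p, hp, rfl⟩, hX⟩
      rw [hpts] at hp
      rcases hp with rfl | hp
      · right; rw [hC]
      · by_cases hpe : p = p₀
        · subst hpe; left; rw [hB]
        · exfalso
          exact hX ⟨p, hp, by rw [hA p hp hpe]⟩
    · rintro (rfl | rfl)
      · refine ⟨⟨p₀, hpts ▸ Set.mem_insert_of_mem q hp₀pts, by rw [hB]⟩, ?_⟩
        rintro ⟨p, hp, hpJ⟩
        have hplt : p < nextPt α m p := lt_nextPt (pts_lt_one hp)
        rw [Set.Ico_eq_Ico_iff (Or.inr hplt)] at hpJ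
        obtain ⟨rfl, h2⟩ := hpJ
        have hmem := (nextPt_mem (α := α) (n := m) (pts_lt_one hp)).1
        rw [← h2] at hmem
        rcases hmem with h | h
        · exact hqnot h
        · simp only [Set.mem_singleton_iff] at h; linarith
      · refine ⟨⟨q, hqn, by rw [hC]⟩, ?_⟩
        rintro ⟨p, hp, hpK⟩
        have hplt : p < nextPt α m p := lt_nextPt (pts_lt_one hp)
        rw [Set.Ico_eq_Ico_iff (Or.inr hplt)] at hpK
        exact hqnot (hpK.1 ▸ hp)
  have hJK : J ≠ K := by
    intro h
    have : q ∈ K := Set.mem_Ico.2 ⟨le_refl q, hqt⟩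
    rw [← h] at this
    exact absurd this.2 (lt_irrefl q)
  have hdisj : Disjoint J K := Set.Ico_disjoint_Ico_same
  have hIJK : I = J ∪ K := (Set.Ico_union_Ico_eq_Ico (le_of_lt hp₀q) (le_of_lt hqt)).symm
  -- gaps
  have hgfn : (gaps α n).Finite := gaps_finite α n
  have hgfm : (gaps α m).Finite := gaps_finite α m
  have hgne_n : (gaps α n).Nonempty := ⟨_, 0, zero_mem_pts α (by omega), rfl⟩
  have hgne_m : (gaps α m).Nonempty := ⟨_, p₀, hp₀pts, rfl⟩
  have hp₀n : p₀ ∈ pts α n := hpts ▸ Set.mem_insert_of_mem q hp₀pts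
  have hg1 : q - p₀ ∈ gaps α n := ⟨p₀, hp₀n, by rw [hB]⟩
  have hg2 : t - q ∈ gaps α n := ⟨q, hqn, by rw [hC]⟩
  set a : ℝ := sInf (gaps α n)
  set b : ℝ := sSup (gaps α n)
  set a' : ℝ := sInf (gaps α m)
  set b' : ℝ := sSup (gaps α m)
  have hb_mem : ∀ g ∈ gaps α n, g ≤ b := fun g hg => le_csSup hgfn.bddAbove hg
  have ha_mem : ∀ g ∈ gaps α n, a ≤ g := fun g hg => csInf_le hgfn.bddBelow hg
  have hb'_mem : ∀ g ∈ gaps α m, g ≤ b' := fun g hg => le_csSup hgfm.bddAbove hg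
  have haa' : a ≤ a' := by
    apply le_csInf hgne_m
    rintro g ⟨p, hp, rfl⟩
    by_cases hpe : p = p₀
    · subst hpe
      have h1 : a ≤ q - p₀ := ha_mem _ hg1
      linarith
    · exact ha_mem _ ⟨p, hpts ▸ Set.mem_insert_of_mem q hp, by rw [hA p hp hpe]⟩
  have hb0 : 0 < b := lt_of_lt_of_le (gaps_pos hg1) (hb_mem _ hg1)
  have hbb' : b' ≤ 2 * b := by
    apply csSup_le hgne_m
    rintro g ⟨p, hp, rfl⟩
    by_cases hpe : p = p₀
    · subst hpe
      have h1 := hb_mem _ hg1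
      have h2 := hb_mem _ hg2
      linarith
    · have := hb_mem _ ⟨p, hpts ▸ Set.mem_insert_of_mem q hp, by rw [hA p hp hpe]⟩
      linarith
  have hb'0 : 0 < b' := by
    have hg' : t - p₀ ∈ gaps α m := ⟨p₀, hp₀pts, rfl⟩
    exact lt_of_lt_of_le (gaps_pos hg') (hb'_mem _ hg')
  have ha0 : 0 ≤ a := le_csInf hgne_n fun g hg => le_of_lt (gaps_pos hg)
  refine ⟨⟨I, J, K, hcells1, hcells2, hJK, hdisj, hIJK⟩, haa', hbb', ?_⟩
  have ha'0 : 0 ≤ a' := le_trans ha0 haa'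
  calc (1 / 2) * (a / b) = a / (2 * b) := by ring
    _ ≤ a' / b' := div_le_div₀ ha'0 haa' hb'0 hbb'
end

section
/- Let α be an irrational real number whose regular continued fraction expansion has unbounded partial quotients (i.e., α is well approximable). Then there exists a strictly increasing sequence of positive integers (m_j)_{j≥1} such that the ratio (shortest subinterval length of P_{m_j})/(longest subinterval length of P_{m_j}) tends to 1 as j → ∞; moreover for each j the m_j-step partition has only two distinct subinterval lengths. -/
set_option maxHeartbeats 1000000


lemma twoGap (α : ℝ) (hα : Irrational α) (q : ℕ) (p : ℤ) (hq : 2 ≤ q)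
    (hcop : IsCoprime p (q : ℤ)) (hΔ : (q : ℝ) * |q * α - p| < 1/2) :
    (gaps α q).ncard = 2 ∧
      1 - 2 * ((q : ℝ) * |q * α - p|) ≤ sInf (gaps α q) / sSup (gaps α q) ∧
      sInf (gaps α q) / sSup (gaps α q) ≤ 1 := by
  have hq0 : 0 < q := by omega
  have hqR : (0 : ℝ) < q := by exact_mod_cast hq0
  set θ : ℝ := q * α - p with hθdef
  have hαθ : α = ((p : ℝ) + θ) / q := by field_simp [hθdef]; linarith
  have hθ0 : θ ≠ 0 := by
    intro h
    rw [h] at hαθ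
    exact hα ⟨(p : ℚ) / (q : ℚ), by push_cast; rw [hαθ]; ring⟩
  -- the multiplicative inverse `s` of `p` mod `q`
  haveI : NeZero q := ⟨by omega⟩
  haveI : Fact (1 < q) := ⟨by omega⟩
  obtain ⟨u, v, huv⟩ := id hcop
  set s : ℕ := (u % (q : ℤ)).toNat with hsdef
  have hsZ : (s : ℤ) = u % (q : ℤ) :=
    Int.toNat_of_nonneg (Int.emod_nonneg u (by exact_mod_cast hq0.ne'))
  have hsq : s < q := by
    have := Int.emod_lt_of_pos u (by exact_mod_cast hq0 : (0:ℤ) < q)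
    omega
  have hcastS : ((s : ℕ) : ZMod q) = (u : ZMod q) := by
    have : (((s : ℤ)) : ZMod q) = ((u % (q : ℤ) : ℤ) : ZMod q) := by rw [hsZ]
    rwa [ZMod.intCast_mod, Int.cast_natCast] at this
  have hps : (p : ZMod q) * (s : ZMod q) = 1 := by
    have := congrArg (fun z : ℤ => (z : ZMod q)) huv
    push_cast at this
    rw [ZMod.natCast_self, mul_zero, add_zero] at this
    rw [hcastS, mul_comm]; exact this
  have hs1 : 1 ≤ s := by
    rcases Nat.eq_zero_or_pos s with h | h
    · exfalso
      rw [h] at hps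
      simp at hps
    · exact h
  -- definitions
  set c : ℕ → ℕ := fun j => (j * s) % q with hcdef
  set y : ℕ → ℝ := fun j => ((j : ℝ) + (c j : ℝ) * θ) / q with hydef
  have valinj : ∀ a b : ℕ, a < q → b < q → ((a : ZMod q) = (b : ZMod q)) → a = b := by
    intro a b ha hb h
    have := congrArg ZMod.val h
    rwa [ZMod.val_cast_of_lt ha, ZMod.val_cast_of_lt hb] at this
  have hcb : ∀ j, c j < q := fun j => Nat.mod_lt _ hq0
  have hkθ : ∀ k : ℕ, k ≤ q → |(k : ℝ) * θ| ≤ (q : ℝ) * |θ| := by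
    intro k hk
    rw [abs_mul, Nat.abs_cast]
    exact mul_le_mul_of_nonneg_right (by exact_mod_cast hk) (abs_nonneg _)
  have habs : ∀ a b : ℕ, a < q → b < q → |((a : ℝ) - (b : ℝ)) * θ| < 1/2 := by
    intro a b ha hb
    have h1 : |(a : ℝ) - (b : ℝ)| ≤ (q : ℝ) := by
      rw [abs_le]
      constructor
      · have : (0:ℝ) ≤ (a:ℝ) := Nat.cast_nonneg a
        have : (b : ℝ) ≤ q := by exact_mod_cast hb.le
        linarith [Nat.cast_nonneg (α := ℝ) a]
      · have : (a : ℝ) ≤ q := by exact_mod_cast ha.le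
        linarith [Nat.cast_nonneg (α := ℝ) b]
    calc |((a : ℝ) - (b : ℝ)) * θ| = |(a:ℝ) - b| * |θ| := abs_mul _ _
      _ ≤ (q : ℝ) * |θ| := mul_le_mul_of_nonneg_right h1 (abs_nonneg _)
      _ < 1/2 := hΔ
  have hy_mono : ∀ i j : ℕ, i < j → j < q → y i < y j := by
    intro i j hij hjq
    have h1 : (i : ℝ) + 1 ≤ j := by exact_mod_cast hij
    have h2 := abs_lt.1 (habs (c j) (c i) (hcb j) (hcb i))
    show ((i : ℝ) + (c i : ℝ) * θ) / q < ((j : ℝ) + (c j : ℝ) * θ) / q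
    rw [div_lt_div_iff_of_pos_right hqR]
    nlinarith [h2.1, h2.2]
  have hy0 : y 0 = 0 := by simp [hydef, hcdef]
  have hylt1 : ∀ j : ℕ, j < q → y j < 1 := by
    intro j hj
    have h1 : (j : ℝ) ≤ (q : ℝ) - 1 := by
      have : (j : ℝ) + 1 ≤ q := by exact_mod_cast hj
      linarith
    have h2 := abs_le.1 (hkθ (c j) (hcb j).le)
    rw [hydef]
    rw [div_lt_one hqR]
    nlinarith [h2.1, h2.2]
  have hy_nonneg : ∀ j : ℕ, j < q → 0 ≤ y j := by
    intro j hj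
    rcases Nat.eq_zero_or_pos j with h | h
    · rw [h, hy0]
    · have h1 : (1 : ℝ) ≤ j := by exact_mod_cast h
      have h2 := abs_le.1 (hkθ (c j) (hcb j).le)
      apply div_nonneg _ hqR.le
      nlinarith [h2.1]
  -- the key computation: the points of the orbit
  have hfract : ∀ k : ℕ, k < q →
      Int.fract ((k : ℝ) * α) = y (((k : ℤ) * p % (q : ℤ)).toNat) ∧
      (((k : ℤ) * p % (q : ℤ)).toNat) < q ∧
      c (((k : ℤ) * p % (q : ℤ)).toNat) = k := by
    intro k hk
    set r : ℤ := (k : ℤ) * p % (q : ℤ) with hrdef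
    have hr0 : 0 ≤ r := Int.emod_nonneg _ (by exact_mod_cast hq0.ne')
    have hrq : r < (q : ℤ) := Int.emod_lt_of_pos _ (by exact_mod_cast hq0)
    set j : ℕ := r.toNat with hjdef
    have hjr : (j : ℤ) = r := Int.toNat_of_nonneg hr0
    have hjq : j < q := by omega
    have hcjk : c j = k := by
      apply valinj _ _ (hcb j) hk
      show (((j * s) % q : ℕ) : ZMod q) = (k : ZMod q)
      rw [ZMod.natCast_mod]
      push_cast
      have hjz : ((j : ℕ) : ZMod q) = (k : ZMod q) * (p : ZMod q) := by
        have h1 : (((j : ℤ)) : ZMod q) = ((r : ℤ) : ZMod q) := by rw [hjr]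
        rw [hrdef, ZMod.intCast_mod] at h1
        push_cast at h1
        exact h1
      rw [hjz, mul_assoc, hps, mul_one]
    refine ⟨?_, hjq, hcjk⟩
    -- now the fract computation
    have e := Int.mul_ediv_add_emod ((k : ℤ) * p) (q : ℤ)
    have eR : (q : ℝ) * (((k : ℤ) * p / (q : ℤ) : ℤ) : ℝ) + (r : ℝ) = (k : ℝ) * p := by
      exact_mod_cast e
    have hkα : (k : ℝ) * α = (((k : ℤ) * p / (q : ℤ) : ℤ) : ℝ) + ((r : ℝ) + (k : ℝ) * θ) / q := by
      rw [hαθ]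
      field_simp
      linarith [eR]
    -- bounds on (r + kθ)/q
    have hbound : 0 ≤ ((r : ℝ) + (k : ℝ) * θ) / q ∧ ((r : ℝ) + (k : ℝ) * θ) / q < 1 := by
      have h2 := abs_le.1 (hkθ k hk.le)
      have hrle : (r : ℝ) ≤ (q : ℝ) - 1 := by
        have : (r : ℝ) + 1 ≤ (q : ℝ) := by exact_mod_cast hrq
        linarith
      rcases Nat.eq_zero_or_pos k with hk0 | hk0
      · have : r = 0 := by simp [hrdef, hk0]
        rw [this, hk0]
        norm_num [hqR]
      · have hr1 : 1 ≤ r := by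
          rcases hr0.lt_or_eq with h | h
          · omega
          · exfalso
            have hdvd : (q : ℤ) ∣ (k : ℤ) * p := Int.dvd_of_emod_eq_zero h.symm
            have : (q : ℤ) ∣ (k : ℤ) := (hcop.symm).dvd_of_dvd_mul_right hdvd
            have : q ∣ k := by exact_mod_cast this
            have := Nat.le_of_dvd hk0 this
            omega
        have hr1R : (1 : ℝ) ≤ r := by exact_mod_cast hr1
        constructor
        · apply div_nonneg _ hqR.le
          nlinarith [h2.1]
        · rw [div_lt_one hqR]
          nlinarith [h2.2]
    rw [hkα, Int.fract_intCast_add, Int.fract_eq_self.2 hbound]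
    rw [hydef]
    simp only [hcjk]
    have : ((j : ℕ) : ℝ) = (r : ℝ) := by exact_mod_cast hjr
    rw [this]
  have hinj : ∀ a b : ℕ, a < q → b < q → c a = c b → a = b := by
    intro a b ha hb h
    apply valinj _ _ ha hb
    have h1 : ((c a : ℕ) : ZMod q) = ((c b : ℕ) : ZMod q) := by rw [h]
    simp only [hcdef, ZMod.natCast_mod] at h1
    push_cast at h1
    have hsp : (s : ZMod q) * (p : ZMod q) = 1 := by rw [mul_comm]; exact hps
    calc (a : ZMod q) = (a : ZMod q) * s * p := by rw [mul_assoc, hsp, mul_one]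
      _ = (b : ZMod q) * s * p := by rw [h1]
      _ = (b : ZMod q) := by rw [mul_assoc, hsp, mul_one]
  have pts_eq : pts α q = y '' Set.Iio q := by
    ext x
    constructor
    · rintro ⟨k, hk, rfl⟩
      obtain ⟨h1, h2, _⟩ := hfract k hk
      exact ⟨_, h2, h1.symm⟩
    · rintro ⟨j, hj, rfl⟩
      refine ⟨c j, hcb j, ?_⟩
      obtain ⟨h1, h2, h3⟩ := hfract (c j) (hcb j)
      rw [h1, hinj _ _ h2 hj h3]
  have hfin : (pts α q ∪ {1} : Set ℝ).Finite := by
    rw [pts_eq]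
    exact ((Set.finite_Iio q).image y).union (Set.finite_singleton 1)
  have hnext : ∀ j : ℕ, j + 1 < q → nextPt α q (y j) = y (j + 1) := by
    intro j hj1
    have hjq : j < q := by omega
    have lb : ∀ z ∈ (pts α q ∪ {1}) ∩ Set.Ioi (y j), y (j + 1) ≤ z := by
      rintro z ⟨hz1 | hz2, hz3⟩
      · rw [pts_eq] at hz1
        obtain ⟨i, hi, rfl⟩ := hz1
        rw [Set.mem_Ioi] at hz3
        rcases lt_trichotomy i (j + 1) with h | h | h
        · exfalso
          rcases Nat.lt_or_ge i j with h' | h'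
          · exact absurd hz3 (not_lt.2 (hy_mono i j h' hjq).le)
          · have : i = j := by omega
            rw [this] at hz3
            exact lt_irrefl _ hz3
        · rw [h]
        · exact (hy_mono _ _ h hi).le
      · rw [Set.mem_singleton_iff] at hz2
        rw [hz2]
        exact (hylt1 _ hj1).le
    have hmem : y (j + 1) ∈ (pts α q ∪ {1}) ∩ Set.Ioi (y j) :=
      ⟨Or.inl (pts_eq ▸ ⟨j + 1, hj1, rfl⟩), hy_mono j (j + 1) (lt_add_one j) hj1⟩
    exact le_antisymm (csInf_le ⟨y (j + 1), lb⟩ hmem) (le_csInf ⟨_, hmem⟩ lb)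
  have hlast : nextPt α q (y (q - 1)) = 1 := by
    have hq1 : q - 1 < q := by omega
    have lb : ∀ z ∈ (pts α q ∪ {1}) ∩ Set.Ioi (y (q - 1)), (1 : ℝ) ≤ z := by
      rintro z ⟨hz1 | hz2, hz3⟩
      · exfalso
        rw [pts_eq] at hz1
        obtain ⟨i, hi, rfl⟩ := hz1
        rw [Set.mem_Ioi] at hz3
        have hi' : i < q := hi
        rcases Nat.lt_or_ge i (q - 1) with h | h
        · exact absurd hz3 (not_lt.2 (hy_mono i (q - 1) h hq1).le)
        · have : i = q - 1 := by omega
          rw [this] at hz3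
          exact lt_irrefl _ hz3
      · rw [Set.mem_singleton_iff] at hz2
        rw [hz2]
    have hmem : (1 : ℝ) ∈ (pts α q ∪ {1}) ∩ Set.Ioi (y (q - 1)) :=
      ⟨Or.inr rfl, hylt1 _ hq1⟩
    exact le_antisymm (csInf_le ⟨1, lb⟩ hmem) (le_csInf ⟨_, hmem⟩ lb)
  set A : ℝ := (1 + (s : ℝ) * θ) / q with hAdef
  set B : ℝ := (1 + ((s : ℝ) - q) * θ) / q with hBdef
  have hcsucc : ∀ j : ℕ, ((c (j+1) : ℝ) - (c j : ℝ) = (s : ℝ)) ∨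
      ((c (j+1) : ℝ) - (c j : ℝ) = (s : ℝ) - q) := by
    intro j
    have h1 : c (j+1) = (c j + s) % q := by
      show ((j+1) * s) % q = _
      rw [add_mul, one_mul, Nat.add_mod, Nat.mod_eq_of_lt hsq]
    rcases Nat.lt_or_ge (c j + s) q with h | h
    · left
      rw [h1, Nat.mod_eq_of_lt h]
      push_cast
      ring
    · right
      have h2 : (c j + s) % q = c j + s - q := by
        rw [Nat.mod_eq_sub_mod h, Nat.mod_eq_of_lt (by have := hcb j; omega)]
      rw [h1, h2]
      have h3 : ((c j + s - q : ℕ) : ℝ) = (c j : ℝ) + s - q := by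
        push_cast [Nat.cast_sub h]
        ring
      rw [h3]
      ring
  have hclast : c (q - 1) = q - s := by
    apply valinj _ _ (hcb _) (by omega)
    show (((q-1) * s % q : ℕ) : ZMod q) = ((q - s : ℕ) : ZMod q)
    rw [ZMod.natCast_mod]
    push_cast [Nat.cast_sub hsq.le, Nat.cast_sub (by omega : 1 ≤ q)]
    rw [ZMod.natCast_self]
    ring
  have hgap_mid : ∀ j : ℕ, j + 1 < q → y (j+1) - y j = A ∨ y (j+1) - y j = B := by
    intro j hj
    have he : y (j+1) - y j = (1 + ((c (j+1) : ℝ) - (c j : ℝ)) * θ) / q := by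
      rw [hydef]
      push_cast
      field_simp
      ring
    rcases hcsucc j with h | h
    · left; rw [he, h]
    · right; rw [he, h]
  have hgap_last : 1 - y (q - 1) = B := by
    rw [hydef]
    simp only [hclast]
    have h1 : ((q - 1 : ℕ) : ℝ) = (q : ℝ) - 1 := by
      push_cast [Nat.cast_sub (by omega : 1 ≤ q)]; ring
    have h2 : ((q - s : ℕ) : ℝ) = (q : ℝ) - s := by
      push_cast [Nat.cast_sub hsq.le]; ring
    rw [h1, h2, hBdef]
    field_simp
    ring
  have hgaps : gaps α q = {A, B} := by
    ext g
    simp only [gaps, Set.mem_setOf_eq, Set.mem_insert_iff, Set.mem_singleton_iff]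
    constructor
    · rintro ⟨x, hx, rfl⟩
      rw [pts_eq] at hx
      obtain ⟨j, hj, rfl⟩ := hx
      have hj' : j < q := hj
      rcases Nat.lt_or_ge (j+1) q with h | h
      · rw [hnext j h]
        exact hgap_mid j h
      · have : j = q - 1 := by omega
        subst this
        rw [hlast]
        right
        exact hgap_last
    · rintro (rfl | rfl)
      · refine ⟨y 0, pts_eq ▸ ⟨0, hq0, rfl⟩, ?_⟩
        rw [hnext 0 (by omega), hy0, sub_zero]
        have hc1 : c 1 = s := by
          show (1 * s) % q = s
          rw [one_mul, Nat.mod_eq_of_lt hsq]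
        rw [hydef]
        simp only [hc1]
        rw [hAdef]
        push_cast
        ring
      · refine ⟨y (q-1), pts_eq ▸ ⟨q-1, Set.mem_Iio.mpr (by omega), rfl⟩, ?_⟩
        rw [hlast]
        exact hgap_last.symm
  have hAB : A ≠ B := by
    intro h
    have h2 : 1 + (s : ℝ) * θ = 1 + ((s : ℝ) - q) * θ := by
      have h3 := congrArg (fun z : ℝ => z * q) h
      rw [hAdef, hBdef] at h3
      simpa [div_mul_cancel₀, hqR.ne'] using h3
    have h3 : (q : ℝ) * θ = 0 := by nlinarith [h2]
    rcases mul_eq_zero.1 h3 with h4 | h4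
    · exact hqR.ne' h4
    · exact hθ0 h4
  refine ⟨by rw [hgaps]; exact Set.ncard_pair hAB, ?_, ?_⟩
  all_goals rw [hgaps, csInf_pair, csSup_pair]
  all_goals {
    set Δ : ℝ := (q : ℝ) * |θ| with hΔdef
    have hΔ0 : 0 ≤ Δ := by positivity
    have hΔhalf : Δ < 1/2 := hΔ
    have hsR : (0 : ℝ) ≤ (s : ℝ) := Nat.cast_nonneg s
    have hsRq : (s : ℝ) ≤ q := by exact_mod_cast hsq.le
    have hsA : |(s : ℝ) * θ| ≤ Δ := hkθ s hsq.le
    have hsB : |((s : ℝ) - q) * θ| ≤ Δ := by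
      rw [abs_mul, hΔdef]
      apply mul_le_mul_of_nonneg_right _ (abs_nonneg θ)
      rw [abs_le]
      constructor <;> linarith
    have hA1 : (1 - Δ)/q ≤ A := by
      rw [hAdef]
      gcongr
      linarith [neg_abs_le ((s : ℝ) * θ)]
    have hA2 : A ≤ (1 + Δ)/q := by
      rw [hAdef]
      gcongr
      linarith [le_abs_self ((s : ℝ) * θ)]
    have hB1 : (1 - Δ)/q ≤ B := by
      rw [hBdef]
      gcongr
      linarith [neg_abs_le (((s : ℝ) - q) * θ)]
    have hB2 : B ≤ (1 + Δ)/q := by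
      rw [hBdef]
      gcongr
      linarith [le_abs_self (((s : ℝ) - q) * θ)]
    have hI : (1 - Δ)/q ≤ A ⊓ B := le_inf hA1 hB1
    have hS : A ⊔ B ≤ (1 + Δ)/q := sup_le hA2 hB2
    have hIS : A ⊓ B ≤ A ⊔ B := inf_le_sup
    have hIpos : 0 < A ⊓ B := lt_of_lt_of_le (div_pos (by linarith) hqR) hI
    have hSpos : 0 < A ⊔ B := lt_of_lt_of_le hIpos hIS
    first
    | · -- goal : 1 - 2Δ ≤ inf/sup
        rw [le_div_iff₀ hSpos]
        calc (1 - 2*Δ) * (A ⊔ B) ≤ (1 - 2*Δ) * ((1 + Δ)/q) :=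
              mul_le_mul_of_nonneg_left hS (by linarith)
          _ = ((1 - 2*Δ) * (1 + Δ))/q := by ring
          _ ≤ (1 - Δ)/q := by
                gcongr <;> nlinarith [sq_nonneg Δ]
          _ ≤ A ⊓ B := hI
    | · exact (div_le_one hSpos).2 hIS
  }

section
open GenContFract
lemma approx (α : ℝ) (hα : Irrational α)
    (hub : ∀ B : ℝ, ∃ (n : ℕ) (b : ℝ),
      (GenContFract.of α).partDens.get? n = some b ∧ B < b) :
    ∀ ε : ℝ, 0 < ε → ∀ N : ℕ, ∃ (q : ℕ) (p : ℤ),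
      N ≤ q ∧ 2 ≤ q ∧ IsCoprime p (q : ℤ) ∧ (q : ℝ) * |q * α - p| < ε := by
  have hnt : ∀ n, ¬(GenContFract.of α).TerminatedAt n := by
    intro n hn
    obtain ⟨r, hr⟩ := (terminates_iff_rat α).1 ⟨n, hn⟩
    exact hα ⟨r, hr.symm⟩
  have hsg : ∀ n, ∃ gp, (GenContFract.of α).s.get? n = some gp := fun n =>
    Option.ne_none_iff_exists'.1 (hnt n)
  -- integrality of numerators and denominators
  have hint : ∀ n, (∃ a : ℤ, (GenContFract.of α).nums n = (a : ℝ)) ∧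
      (∃ b : ℤ, (GenContFract.of α).dens n = (b : ℝ)) := by
    intro n
    induction n using Nat.twoStepInduction with
    | zero =>
      refine ⟨⟨⌊α⌋, ?_⟩, ⟨1, ?_⟩⟩
      · rw [zeroth_num_eq_h, of_h_eq_floor]
      · rw [zeroth_den_eq_one]; norm_num
    | one =>
      obtain ⟨gp, hgp⟩ := hsg 0
      obtain ⟨ha, z, hz⟩ := of_partNum_eq_one_and_exists_int_partDen_eq hgp
      refine ⟨⟨z * ⌊α⌋ + 1, ?_⟩, ⟨z, ?_⟩⟩
      · rw [first_num_eq hgp, of_h_eq_floor, ha, hz]; push_cast; ring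
      · rw [first_den_eq hgp, hz]
    | more n ih2 ih1 =>
      obtain ⟨gp, hgp⟩ := hsg (n + 1)
      obtain ⟨ha, z, hz⟩ := of_partNum_eq_one_and_exists_int_partDen_eq hgp
      obtain ⟨⟨a0, ha0⟩, ⟨b0, hb0⟩⟩ := ih2
      obtain ⟨⟨a1, ha1⟩, ⟨b1, hb1⟩⟩ := ih1
      refine ⟨⟨z * a1 + a0, ?_⟩, ⟨z * b1 + b0, ?_⟩⟩
      · rw [nums_recurrence hgp ha0 ha1, ha, hz]; push_cast; ring
      · rw [dens_recurrence hgp hb0 hb1, ha, hz]; push_cast; ring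
  have hden1 : ∀ n, (1 : ℝ) ≤ (GenContFract.of α).dens n := by
    intro n
    have h1 := succ_nth_fib_le_of_nth_den (v := α) (n := n) (Or.inr (hnt _))
    have h2 : (1 : ℕ) ≤ Nat.fib (n + 1) := Nat.fib_pos.2 (Nat.succ_pos n)
    calc (1 : ℝ) ≤ (Nat.fib (n + 1) : ℝ) := by exact_mod_cast h2
      _ ≤ _ := h1
  intro ε hε N
  set M := max 1 N with hMdef
  have hne : (Finset.Icc 1 M).Nonempty := ⟨1, Finset.mem_Icc.2 ⟨le_refl 1, le_max_left 1 N⟩⟩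
  set cmin := (Finset.Icc 1 M).inf' hne
    (fun t => min (Int.fract ((t : ℝ) * α)) (1 - Int.fract ((t : ℝ) * α))) with hcmin
  have hc0 : 0 < cmin := by
    rw [hcmin, Finset.lt_inf'_iff]
    intro t ht
    obtain ⟨ht1, ht2⟩ := Finset.mem_Icc.1 ht
    have htα : Irrational ((t : ℝ) * α) := hα.natCast_mul (by omega)
    have hf0 : 0 < Int.fract ((t : ℝ) * α) := by
      rcases (Int.fract_nonneg ((t : ℝ) * α)).lt_or_eq with h | h
      · exact h
      · exfalso
        have h2 : (t : ℝ) * α = ⌊(t : ℝ) * α⌋ := by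
          have h3 := Int.fract_add_floor ((t : ℝ) * α)
          rw [← h] at h3
          linarith
        exact htα ⟨(⌊(t : ℝ) * α⌋ : ℚ), by rw [h2]; push_cast; norm_num⟩
    exact lt_min hf0 (by linarith [Int.fract_lt_one ((t : ℝ) * α)])
  have hclb : ∀ t : ℕ, 1 ≤ t → t ≤ M → ∀ z : ℤ, cmin ≤ |(t : ℝ) * α - z| := by
    intro t h1 h2 z
    have hmem : t ∈ Finset.Icc 1 M := Finset.mem_Icc.2 ⟨h1, h2⟩
    have hinf : cmin ≤ min (Int.fract ((t : ℝ) * α)) (1 - Int.fract ((t : ℝ) * α)) :=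
      Finset.inf'_le _ hmem
    set x := (t : ℝ) * α with hx
    have hfr : Int.fract x = x - ⌊x⌋ := Int.self_sub_floor x ▸ rfl
    rcases le_or_gt (z : ℝ) (⌊x⌋ : ℝ) with h | h
    · have : cmin ≤ x - z := by
        have : Int.fract x ≤ x - z := by rw [hfr]; linarith
        linarith [min_le_left (Int.fract x) (1 - Int.fract x)]
      linarith [le_abs_self (x - (z : ℝ))]
    · have hz1 : (⌊x⌋ : ℝ) + 1 ≤ z := by
        have : ⌊x⌋ < z := by exact_mod_cast h
        exact_mod_cast this
      have : cmin ≤ (z : ℝ) - x := by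
        have : 1 - Int.fract x ≤ (z : ℝ) - x := by rw [hfr]; linarith
        linarith [min_le_right (Int.fract x) (1 - Int.fract x)]
      linarith [neg_abs_le (x - (z : ℝ)), abs_sub_comm x (z : ℝ), le_abs_self ((z : ℝ) - x)]
  obtain ⟨n, b, hbn, hb⟩ := hub (max (1/ε) (1/cmin))
  have hb1 : (1 : ℝ) ≤ b := of_one_le_get?_partDen hbn
  have hbpos : (0 : ℝ) < b := by linarith
  obtain ⟨A0, hA0⟩ := (hint n).1
  obtain ⟨B0, hB0⟩ := (hint n).2
  have hB1R : (1 : ℝ) ≤ (B0 : ℝ) := hB0 ▸ hden1 n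
  have hB1 : 1 ≤ B0 := by exact_mod_cast hB1R
  have hB0pos : (0 : ℝ) < (B0 : ℝ) := by linarith
  have happrox := abs_sub_convs_le (v := α) (n := n) (hnt n)
  rw [conv_eq_num_div_den, hA0, hB0] at happrox
  have hgrown : b * (B0 : ℝ) ≤ (GenContFract.of α).dens (n + 1) := by
    have := le_of_succ_get?_den hbn
    rwa [hB0] at this
  have hdpos : (0 : ℝ) < (GenContFract.of α).dens (n + 1) := by
    linarith [hden1 (n + 1)]
  have habs2 : |α - (A0 : ℝ) / B0| ≤ 1 / (b * (B0 : ℝ)^2) := by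
    refine le_trans happrox ?_
    rw [div_le_div_iff₀ (by positivity) (by positivity)]
    nlinarith [hgrown]
  -- reduce the fraction
  set r : ℚ := (A0 : ℚ) / (B0 : ℚ) with hrdef
  set q : ℕ := r.den with hqdef
  set pp : ℤ := r.num with hppdef
  have hq1 : 1 ≤ q := r.pos
  have hqZpos : (0 : ℤ) < B0 := by exact_mod_cast hB1
  have hdvd : (q : ℤ) ∣ B0 := by
    have h5 : r = Rat.divInt A0 B0 := by rw [hrdef, Rat.divInt_eq_div]
    rw [hqdef, h5]
    exact Rat.den_dvd A0 B0
  have hqle : (q : ℤ) ≤ B0 := Int.le_of_dvd hqZpos hdvd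
  have hqleR : (q : ℝ) ≤ (B0 : ℝ) := by exact_mod_cast hqle
  have hqRpos : (0 : ℝ) < (q : ℝ) := by exact_mod_cast hq1
  have hcopr : IsCoprime pp (q : ℤ) := by
    rw [Int.isCoprime_iff_gcd_eq_one]
    exact r.reduced
  have hrcast : (r : ℝ) = (A0 : ℝ) / (B0 : ℝ) := by rw [hrdef]; push_cast; ring
  have hrpq : (r : ℝ) = (pp : ℝ) / (q : ℝ) := by
    rw [← Rat.num_div_den r]; push_cast; rfl
  have hkey : (q : ℝ) * |(q : ℝ) * α - pp| ≤ 1 / b := by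
    have e0 : (q : ℝ) * α - pp = q * (α - (pp : ℝ) / q) := by field_simp
    have e1 : |(q : ℝ) * α - pp| = q * |α - (r : ℝ)| := by
      rw [e0, abs_mul, abs_of_pos hqRpos, hrpq]
    have e2 : |α - (r : ℝ)| ≤ 1 / (b * (B0 : ℝ)^2) := by rw [hrcast]; exact habs2
    calc (q : ℝ) * |(q : ℝ) * α - pp| = (q : ℝ)^2 * |α - (r : ℝ)| := by rw [e1]; ring
      _ ≤ (q : ℝ)^2 * (1 / (b * (B0 : ℝ)^2)) := by
          apply mul_le_mul_of_nonneg_left e2 (by positivity)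
      _ ≤ (B0 : ℝ)^2 * (1 / (b * (B0 : ℝ)^2)) := by
          apply mul_le_mul_of_nonneg_right _ (by positivity)
          nlinarith
      _ = 1 / b := by field_simp
  have h1bε : 1 / b < ε := by
    rw [div_lt_iff₀ hbpos]
    have h2 : 1 / ε < b := lt_of_le_of_lt (le_max_left _ _) hb
    calc (1 : ℝ) = ε * (1 / ε) := by field_simp
      _ < ε * b := by exact mul_lt_mul_of_pos_left h2 hε
  have h1bc : 1 / b < cmin := by
    rw [div_lt_iff₀ hbpos]
    have h2 : 1 / cmin < b := lt_of_le_of_lt (le_max_right _ _) hb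
    calc (1 : ℝ) = cmin * (1 / cmin) := by field_simp
      _ < cmin * b := by exact mul_lt_mul_of_pos_left h2 hc0
  have hqM : M < q := by
    by_contra hcon
    push_neg at hcon
    have h3 := hclb q hq1 hcon pp
    have h4 : |(q : ℝ) * α - pp| ≤ 1 / b := by
      have hq1R : (1 : ℝ) ≤ (q : ℝ) := by exact_mod_cast hq1
      calc |(q : ℝ) * α - pp| ≤ (q : ℝ) * |(q : ℝ) * α - pp| := by
            nlinarith [abs_nonneg ((q : ℝ) * α - pp), hq1R]
        _ ≤ 1 / b := hkey
    linarith
  refine ⟨q, pp, by omega, by omega, hcopr, lt_of_le_of_lt hkey h1bε⟩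

end

/-- If the irrational `α` has unbounded partial quotients in its regular continued
fraction expansion (i.e. `α` is well approximable), then there is a strictly increasing
sequence `m_j` of positive integers along which the ratio of the shortest to the longest
subinterval length of the `m_j`-step partition tends to `1`, and each such partition has
exactly two distinct subinterval lengths. -/
theorem well_approximable_two_gap_ratio_tendsto_one (α : ℝ) (hα : Irrational α)
    (hub : ∀ B : ℝ, ∃ (n : ℕ) (b : ℝ),
      (GenContFract.of α).partDens.get? n = some b ∧ B < b) :
    ∃ m : ℕ → ℕ, StrictMono m ∧ (∀ j, 1 ≤ m j) ∧
      Filter.Tendsto (fun j => sInf (gaps α (m j)) / sSup (gaps α (m j)))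
        Filter.atTop (nhds 1) ∧
      ∀ j, (gaps α (m j)).ncard = 2 := by
  have happrox := approx α hα hub
  have key : ∀ N j : ℕ, ∃ q : ℕ, N ≤ q ∧ 1 ≤ q ∧ (gaps α q).ncard = 2 ∧
      1 - 2 / ((j : ℝ) + 1) ≤ sInf (gaps α q) / sSup (gaps α q) ∧
      sInf (gaps α q) / sSup (gaps α q) ≤ 1 := by
    intro N j
    have hj1 : (0 : ℝ) < (j : ℝ) + 1 := by positivity
    have hε : (0 : ℝ) < min (1/4) (1/((j : ℝ) + 1)) := by positivity
    obtain ⟨q, p, hNq, hq2, hcop, hlt⟩ := happrox _ hε N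
    have hhalf : (q : ℝ) * |q * α - p| < 1/2 :=
      lt_of_lt_of_le hlt (le_trans (min_le_left _ _) (by norm_num))
    have h2 := twoGap α hα q p hq2 hcop hhalf
    refine ⟨q, hNq, by omega, h2.1, ?_, h2.2.2⟩
    have h3 : (q : ℝ) * |q * α - p| < 1/((j : ℝ) + 1) :=
      lt_of_lt_of_le hlt (min_le_right _ _)
    have h4 : 2 * ((q : ℝ) * |q * α - p|) ≤ 2 / ((j : ℝ) + 1) := by
      rw [div_eq_mul_inv, ← one_div]
      linarith
    linarith [h2.2.1]
  choose f hf1 hf2 hf3 hf4 hf5 using key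
  have hmj : ∀ j : ℕ, ∃ Nj, (Nat.rec (f 0 0) (fun j prev => f (prev + 1) (j + 1)) j : ℕ)
      = f Nj j := by
    intro j
    cases j with
    | zero => exact ⟨0, rfl⟩
    | succ j => exact ⟨_, rfl⟩
  refine ⟨fun j => Nat.rec (f 0 0) (fun j prev => f (prev + 1) (j + 1)) j, ?_, ?_, ?_, ?_⟩
  · apply strictMono_nat_of_lt_succ
    intro j
    have h1 := hf1 ((Nat.rec (f 0 0) (fun j prev => f (prev + 1) (j + 1)) j : ℕ) + 1) (j + 1)
    have h2 : (Nat.rec (f 0 0) (fun j prev => f (prev + 1) (j + 1)) (j + 1) : ℕ)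
        = f ((Nat.rec (f 0 0) (fun j prev => f (prev + 1) (j + 1)) j : ℕ) + 1) (j + 1) := rfl
    simp only [h2]
    omega
  · intro j
    obtain ⟨Nj, hNj⟩ := hmj j
    simp only [hNj]
    exact hf2 Nj j
  · have h0 := (tendsto_const_div_atTop_nhds_zero_nat (2 : ℝ)).comp (Filter.tendsto_add_atTop_nat 1)
    have h0' : Filter.Tendsto (fun j : ℕ => 2 / ((j : ℝ) + 1)) Filter.atTop (nhds 0) := by
      convert h0 using 2 with j
      simp only [Function.comp]
      push_cast
      ring
    have hlo : Filter.Tendsto (fun j : ℕ => 1 - 2 / ((j : ℝ) + 1)) Filter.atTop (nhds 1) := by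
      have h1 := h0'.const_sub (1 : ℝ)
      simpa using h1
    apply tendsto_of_tendsto_of_tendsto_of_le_of_le hlo tendsto_const_nhds
    · intro j
      obtain ⟨Nj, hNj⟩ := hmj j
      simp only [hNj]
      exact hf4 Nj j
    · intro j
      obtain ⟨Nj, hNj⟩ := hmj j
      simp only [hNj]
      exact hf5 Nj j
  · intro j
    obtain ⟨Nj, hNj⟩ := hmj j
    simp only [hNj]
    exact hf3 Nj j
end

section
/- Let X ⊆ {0,1}^ℤ be a subshift. Then X is uniquely ergodic if and only if for every word w ∈ L(X) there exists δ ≥ 0 such that for every ε > 0 there is an integer N ≥ 1 with the property that for all u ∈ L(X) with |u| ≥ N, | (number of occurrences of w as a subword of u)/|u| − δ | < ε. Moreover, in this case δ = μ([w]_0^+), where μ is the unique σ-invariant Borel probability measure on X. -/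
open MeasureTheory Filter Set Topology
open scoped ENNReal

/-- The left shift on bi-infinite binary sequences. -/
def shift (x : ℤ → Bool) : ℤ → Bool := fun n => x (n + 1)

/-- A subshift: a nonempty closed shift-invariant subset of `{0,1}^ℤ`. -/
def IsSubshift (X : Set (ℤ → Bool)) : Prop :=
  X.Nonempty ∧ IsClosed X ∧ shift '' X = X

/-- The one-sided cylinder set `[w]₀⁺` in `X` determined by a word `w`. -/
def cylinder (X : Set (ℤ → Bool)) (w : List Bool) : Set (ℤ → Bool) :=
  {x ∈ X | ∀ j : Fin w.length, x ((j : ℕ) : ℤ) = w.get j}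

/-- The language of words of length `n`. -/
def lang (X : Set (ℤ → Bool)) (n : ℕ) : Set (List Bool) :=
  {w | w.length = n ∧ (cylinder X w).Nonempty}

/-- The word complexity function. -/
noncomputable def complexity (X : Set (ℤ → Bool)) (n : ℕ) : ℕ :=
  (lang X n).ncard

/-- The two-sided orbit of a point under the shift. -/
def orbit (x : ℤ → Bool) : Set (ℤ → Bool) := {y | ∃ k : ℤ, y = fun n => x (n + k)}

/-- A minimal subshift: every orbit is dense. -/
def IsMinimalSubshift (X : Set (ℤ → Bool)) : Prop :=
  IsSubshift X ∧ ∀ x ∈ X, X ⊆ closure (orbit x)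

/-- A shift-invariant Borel probability measure supported on `X`. -/
def InvariantProbOn (X : Set (ℤ → Bool)) (μ : Measure (ℤ → Bool)) : Prop :=
  IsProbabilityMeasure μ ∧ μ Xᶜ = 0 ∧ Measure.map shift μ = μ

/-- Unique ergodicity of a subshift. -/
def UniquelyErgodic (X : Set (ℤ → Bool)) : Prop :=
  ∃! μ : Measure (ℤ → Bool), InvariantProbOn X μ

/-- `v` occurs as a subword of `u` starting at position `i`. -/
def occursAt (v u : List Bool) (i : ℕ) : Prop :=
  i + v.length ≤ u.length ∧ (u.drop i).take v.length = v

/-- The number of occurrences of `v` as a subword of `u`. -/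
noncomputable def occCount (v u : List Bool) : ℕ :=
  Set.ncard {i | occursAt v u i}

/-- The frequency of the word `w` in long words of the language of `X` converges
uniformly to `δ`. -/
def FreqTo (X : Set (ℤ → Bool)) (w : List Bool) (δ : ℝ) : Prop :=
  ∀ ε : ℝ, 0 < ε → ∃ N : ℕ, 1 ≤ N ∧
    ∀ u : List Bool, (cylinder X u).Nonempty → N ≤ u.length →
      |(occCount w u : ℝ) / (u.length : ℝ) - δ| < ε


namespace UE


lemma continuous_shift : Continuous shift :=
  continuous_pi fun n => continuous_apply (n + 1)

lemma measurable_shift : Measurable shift := continuous_shift.measurable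

lemma shift_iterate (i : ℕ) (x : ℤ → Bool) : shift^[i] x = fun n => x (n + i) := by
  induction i with
  | zero => simp
  | succ k ih =>
    rw [Function.iterate_succ', Function.comp_apply, ih]
    funext n
    show (fun m => x (m + k)) (n + 1) = x (n + (k+1 : ℕ))
    push_cast
    ring_nf

/-- pattern cylinder at position `a` -/
def cylSet (a : ℤ) (v : List Bool) : Set (ℤ → Bool) :=
  {x | ∀ j : Fin v.length, x (a + ((j : ℕ) : ℤ)) = v.get j}

lemma isClopen_cylSet (a : ℤ) (v : List Bool) : IsClopen (cylSet a v) := by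
  have : cylSet a v = ⋂ j : Fin v.length, (fun x : ℤ → Bool => x (a + ((j : ℕ) : ℤ))) ⁻¹' {v.get j} := by
    ext x; simp [cylSet]
  rw [this]
  constructor
  · exact isClosed_iInter fun j => (IsClosed.preimage (continuous_apply _) (isClosed_discrete _))
  · exact isOpen_iInter_of_finite fun j => (IsOpen.preimage (continuous_apply _) (isOpen_discrete _))

lemma measurableSet_cylSet (a : ℤ) (v : List Bool) : MeasurableSet (cylSet a v) :=
  (isClopen_cylSet a v).isOpen.measurableSet

lemma shift_preimage_cylSet (a : ℤ) (v : List Bool) :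
    shift ⁻¹' cylSet a v = cylSet (a + 1) v := by
  ext x
  simp only [cylSet, Set.mem_preimage, Set.mem_setOf_eq, shift]
  constructor <;> intro h j <;> [skip; skip] <;>
    · have := h j
      convert this using 2
      ring

lemma cylinder_eq (X : Set (ℤ → Bool)) (v : List Bool) :
    cylinder X v = X ∩ cylSet 0 v := by
  ext x
  simp only [_root_.cylinder, cylSet, Set.mem_setOf_eq, Set.mem_inter_iff]
  constructor <;> intro ⟨h1, h2⟩ <;> exact ⟨h1, fun j => by simpa using h2 j⟩

lemma cylSet_nil (a : ℤ) : cylSet a [] = Set.univ := by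
  ext x; simp [cylSet]

instance (v u : List Bool) : DecidablePred (occursAt v u) := fun i =>
  decidable_of_iff (i + v.length ≤ u.length ∧ (u.drop i).take v.length = v) Iff.rfl

lemma occursAt_iff (v u : List Bool) (i : ℕ) :
    occursAt v u i ↔ i + v.length ≤ u.length ∧
      ∀ j, (hj : j < v.length) → u.getD (i + j) false = v.getD j false := by
  unfold occursAt
  refine and_congr_right fun hle => ?_
  rw [List.ext_getElem?_iff]
  constructor
  · intro h j hj
    have := h j
    rw [List.getElem?_take_of_lt hj, List.getElem?_drop] at this
    simp [List.getD_eq_getElem?_getD, this]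
  · intro h n
    by_cases hn : n < v.length
    · rw [List.getElem?_take_of_lt hn, List.getElem?_drop]
      have := h n hn
      rw [List.getD_eq_getElem?_getD, List.getD_eq_getElem?_getD] at this
      have h1 : i + n < u.length := by omega
      have h2 : n < v.length := hn
      rw [List.getElem?_eq_getElem h1, List.getElem?_eq_getElem h2] at this ⊢
      simpa using this
    · rw [List.getElem?_eq_none, List.getElem?_eq_none]
      · omega
      · simp only [List.length_take, List.length_drop]
        omega

lemma occSet_eq_coe (v u : List Bool) :
    {i | occursAt v u i} =
      ↑((Finset.range (u.length + 1)).filter (occursAt v u)) := by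
  ext i
  simp only [Finset.coe_filter, Finset.mem_range, Set.mem_setOf_eq, iff_and_self]
  intro h
  have := h.1
  omega

lemma occCount_eq_card (v u : List Bool) :
    occCount v u = ((Finset.range (u.length + 1)).filter (occursAt v u)).card := by
  rw [occCount, occSet_eq_coe, Set.ncard_coe_finset]

lemma occSet_finite (v u : List Bool) : {i | occursAt v u i}.Finite := by
  rw [occSet_eq_coe]; exact (Finset.finite_toSet _)

/-- the word read in `x` on positions `a, a+1, ..., a+m-1`. -/
def patt (x : ℤ → Bool) (a : ℤ) (m : ℕ) : List Bool :=
  List.ofFn fun j : Fin m => x (a + ((j : ℕ) : ℤ))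

@[simp] lemma patt_length (x : ℤ → Bool) (a : ℤ) (m : ℕ) : (patt x a m).length = m := by
  simp [patt]

lemma patt_getD (x : ℤ → Bool) (a : ℤ) (m : ℕ) (t : ℕ) (ht : t < m) :
    (patt x a m).getD t false = x (a + (t : ℤ)) := by
  rw [List.getD_eq_getElem?_getD]
  rw [List.getElem?_eq_getElem (by simpa using ht)]
  simp [patt]

lemma mem_cylSet_iff_getD (a : ℤ) (v : List Bool) (x : ℤ → Bool) :
    x ∈ cylSet a v ↔ ∀ j, (hj : j < v.length) → x (a + (j : ℤ)) = v.getD j false := by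
  constructor
  · intro h j hj
    have := h ⟨j, hj⟩
    simp only at this
    rw [this, List.getD_eq_getElem?_getD, List.getElem?_eq_getElem hj]
    simp
  · intro h j
    have := h j j.isLt
    rw [List.getD_eq_getElem?_getD, List.getElem?_eq_getElem j.isLt] at this
    simpa using this

lemma mem_cylSet_patt_self (x : ℤ → Bool) (a : ℤ) (m : ℕ) : x ∈ cylSet a (patt x a m) := by
  rw [mem_cylSet_iff_getD]
  intro j hj
  rw [patt_getD]
  simpa using hj


/-- The generating π-system: centered cylinders. -/
def gen : Set (Set (ℤ → Bool)) :=
  {S | ∃ (k : ℕ) (v : List Bool), v.length = 2 * k ∧ S = cylSet (-(k : ℤ)) v}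

lemma cylSet_subset_cylSet {k₁ k₂ : ℕ} {v₁ v₂ : List Bool}
    (h1 : v₁.length = 2 * k₁) (h2 : v₂.length = 2 * k₂) (hk : k₁ ≤ k₂)
    (y : ℤ → Bool) (hy1 : y ∈ cylSet (-(k₁ : ℤ)) v₁) (hy2 : y ∈ cylSet (-(k₂ : ℤ)) v₂) :
    cylSet (-(k₂ : ℤ)) v₂ ⊆ cylSet (-(k₁ : ℤ)) v₁ := by
  intro z hz
  rw [mem_cylSet_iff_getD] at *
  intro j hj
  set m := k₂ - k₁ + j with hm
  have hmlt : m < v₂.length := by omega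
  have harith : -(k₂ : ℤ) + (m : ℤ) = -(k₁ : ℤ) + (j : ℤ) := by
    omega
  calc z (-(k₁ : ℤ) + (j : ℤ)) = z (-(k₂ : ℤ) + (m : ℤ)) := by rw [harith]
    _ = v₂.getD m false := hz m hmlt
    _ = y (-(k₂ : ℤ) + (m : ℤ)) := (hy2 m hmlt).symm
    _ = y (-(k₁ : ℤ) + (j : ℤ)) := by rw [harith]
    _ = v₁.getD j false := hy1 j hj

lemma isPiSystem_gen : IsPiSystem gen := by
  rintro s ⟨k₁, v₁, h1, rfl⟩ t ⟨k₂, v₂, h2, rfl⟩ ⟨y, hy1, hy2⟩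
  rcases le_total k₁ k₂ with hk | hk
  · have := cylSet_subset_cylSet h1 h2 hk y hy1 hy2
    have heq : cylSet (-(k₁:ℤ)) v₁ ∩ cylSet (-(k₂:ℤ)) v₂ = cylSet (-(k₂:ℤ)) v₂ :=
      inter_eq_self_of_subset_right this
    rw [heq]; exact ⟨k₂, v₂, h2, rfl⟩
  · have := cylSet_subset_cylSet h2 h1 hk y hy2 hy1
    have heq : cylSet (-(k₁:ℤ)) v₁ ∩ cylSet (-(k₂:ℤ)) v₂ = cylSet (-(k₁:ℤ)) v₁ :=
      inter_eq_self_of_subset_left this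
    rw [heq]; exact ⟨k₁, v₁, h1, rfl⟩

lemma coord_set_measurable (a : ℤ) (b : Bool) :
    MeasurableSet[MeasurableSpace.generateFrom gen] {x : ℤ → Bool | x a = b} := by
  set k : ℕ := a.natAbs + 1 with hk
  have ha1 : -(k : ℤ) ≤ a := by omega
  have ha2 : a < (k : ℤ) := by omega
  set t : ℕ := (a + (k : ℤ)).toNat with ht
  have htk : (t : ℤ) = a + (k : ℤ) := by omega
  have htlt : t < 2 * k := by omega
  have : {x : ℤ → Bool | x a = b} =
      ⋃ (v : List Bool) (_ : v.length = 2 * k ∧ v.getD t false = b), cylSet (-(k : ℤ)) v := by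
    ext x
    simp only [mem_setOf_eq, mem_iUnion]
    constructor
    · intro hxa
      refine ⟨patt x (-(k:ℤ)) (2*k), ⟨patt_length _ _ _, ?_⟩, mem_cylSet_patt_self _ _ _⟩
      rw [patt_getD _ _ _ _ htlt]
      rw [show -(k:ℤ) + (t:ℤ) = a by omega]
      exact hxa
    · rintro ⟨v, ⟨hvl, hvd⟩, hxv⟩
      rw [mem_cylSet_iff_getD] at hxv
      have := hxv t (by omega)
      rw [show -(k:ℤ) + (t:ℤ) = a by omega] at this
      rw [this, hvd]
  rw [this]
  refine MeasurableSet.biUnion (Set.to_countable _) ?_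
  rintro v ⟨hvl, -⟩
  exact MeasurableSpace.measurableSet_generateFrom ⟨k, v, hvl, rfl⟩

lemma measurableSpace_eq :
    (inferInstance : MeasurableSpace (ℤ → Bool)) = MeasurableSpace.generateFrom gen := by
  apply le_antisymm
  · rw [show (inferInstance : MeasurableSpace (ℤ → Bool)) = MeasurableSpace.pi from rfl]
    refine iSup_le fun a => ?_
    rw [← measurable_iff_comap_le]
    refine @measurable_to_countable' Bool (ℤ → Bool) _ _ (MeasurableSpace.generateFrom gen) _ fun b => ?_
    have : (fun x : ℤ → Bool => x a) ⁻¹' {b} = {x : ℤ → Bool | x a = b} := by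
      ext x; simp
    rw [this]
    exact coord_set_measurable a b
  · exact MeasurableSpace.generateFrom_le fun s ⟨k, v, hv, hs⟩ => hs ▸ measurableSet_cylSet _ _

lemma exists_clopen_nbhd_in_open {Y : Set (ℤ → Bool)} (hY : IsOpen Y) {y : ℤ → Bool}
    (hy : y ∈ Y) : ∃ k : ℕ, cylSet (-(k : ℤ)) (patt y (-(k : ℤ)) (2 * k)) ⊆ Y := by
  obtain ⟨I, u, hIu, hsub⟩ := isOpen_pi_iff.mp hY y hy
  set k : ℕ := (I.sup fun i => i.natAbs) + 1 with hk
  refine ⟨k, fun z hz => ?_⟩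
  apply hsub
  intro i hi
  have hib : i.natAbs ≤ I.sup fun i => i.natAbs := Finset.le_sup hi
  have h1 : -(k:ℤ) ≤ i := by omega
  have h2 : i < (k:ℤ) := by omega
  set t : ℕ := (i + (k : ℤ)).toNat with htdef
  have htk : (t : ℤ) = i + (k : ℤ) := by omega
  have htlt : t < 2 * k := by omega
  rw [mem_cylSet_iff_getD] at hz
  have := hz t (by rw [patt_length]; omega)
  rw [patt_getD _ _ _ _ htlt] at this
  rw [show -(k:ℤ) + (t:ℤ) = i by omega] at this
  rw [this]
  exact (hIu i hi).2

section Emp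

-- axioms standing for Layer 1/2 results
/-! ### Orbits stay in X -/

lemma iterate_mem {X : Set (ℤ → Bool)} (hXs : shift '' X = X) {z : ℤ → Bool} (hz : z ∈ X)
    (i : ℕ) : shift^[i] z ∈ X := by
  induction i with
  | zero => simpa
  | succ k ih =>
    rw [Function.iterate_succ', Function.comp_apply]
    rw [← hXs]
    exact Set.mem_image_of_mem _ ih

/-! ### Empirical frequencies -/

variable (x : ℕ → ℤ → Bool) (ℓ : ℕ → ℕ)

/-- counting set -/
def cset (n : ℕ) (S : Set (ℤ → Bool)) : Set ℕ := {i | i < ℓ n ∧ shift^[i] (x n) ∈ S}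

lemma cset_finite (n : ℕ) (S : Set (ℤ → Bool)) : (cset x ℓ n S).Finite :=
  (Set.finite_lt_nat (ℓ n)).subset fun _ hi => hi.1

/-- empirical frequency of the set `S` in the orbit segment of `x n` of length `ℓ n`. -/
noncomputable def emp (n : ℕ) (S : Set (ℤ → Bool)) : ℝ :=
  ((cset x ℓ n S).ncard : ℝ) / (ℓ n : ℝ)

lemma emp_nonneg (n : ℕ) (S : Set (ℤ → Bool)) : 0 ≤ emp x ℓ n S := by
  apply div_nonneg <;> positivity

lemma cset_ncard_le (n : ℕ) (S : Set (ℤ → Bool)) : (cset x ℓ n S).ncard ≤ ℓ n := by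
  have h : cset x ℓ n S ⊆ ↑(Finset.range (ℓ n)) := by
    intro i hi; simpa using hi.1
  calc (cset x ℓ n S).ncard ≤ (↑(Finset.range (ℓ n)) : Set ℕ).ncard :=
        Set.ncard_le_ncard h (Finset.finite_toSet _)
    _ = ℓ n := by rw [Set.ncard_coe_finset, Finset.card_range]

lemma emp_le_one (n : ℕ) (S : Set (ℤ → Bool)) : emp x ℓ n S ≤ 1 := by
  rcases Nat.eq_zero_or_pos (ℓ n) with h | h
  · simp [emp, h]
  · rw [emp, div_le_one (by positivity)]
    exact_mod_cast cset_ncard_le x ℓ n S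

lemma emp_mono (n : ℕ) {S T : Set (ℤ → Bool)} (hST : S ⊆ T) : emp x ℓ n S ≤ emp x ℓ n T := by
  rcases Nat.eq_zero_or_pos (ℓ n) with h | h
  · simp [emp, h]
  · rw [emp, emp, div_le_div_iff_of_pos_right (by positivity)]
    refine Nat.cast_le.mpr (Set.ncard_le_ncard ?_ (cset_finite x ℓ n T))
    intro i hi
    exact ⟨hi.1, hST hi.2⟩

lemma emp_union_le (n : ℕ) (S T : Set (ℤ → Bool)) :
    emp x ℓ n (S ∪ T) ≤ emp x ℓ n S + emp x ℓ n T := by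
  rcases Nat.eq_zero_or_pos (ℓ n) with h | h
  · simp [emp, h]
  · rw [emp, emp, emp, ← add_div, div_le_div_iff_of_pos_right (by positivity)]
    have hU : cset x ℓ n (S ∪ T) ⊆ cset x ℓ n S ∪ cset x ℓ n T := by
      rintro i ⟨hi, hmem | hmem⟩
      · exact Or.inl ⟨hi, hmem⟩
      · exact Or.inr ⟨hi, hmem⟩
    calc ((cset x ℓ n (S ∪ T)).ncard : ℝ)
        ≤ ((cset x ℓ n S ∪ cset x ℓ n T).ncard : ℝ) := by
          exact_mod_cast Set.ncard_le_ncard hU ((cset_finite x ℓ n S).union (cset_finite x ℓ n T))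
      _ ≤ ((cset x ℓ n S).ncard + (cset x ℓ n T).ncard : ℝ) := by
          exact_mod_cast Set.ncard_union_le _ _

lemma emp_add (n : ℕ) {S T : Set (ℤ → Bool)} (hd : Disjoint S T) :
    emp x ℓ n (S ∪ T) = emp x ℓ n S + emp x ℓ n T := by
  rw [emp, emp, emp, ← add_div]
  congr 1
  have hU : cset x ℓ n (S ∪ T) = cset x ℓ n S ∪ cset x ℓ n T := by
    ext i
    simp only [cset, Set.mem_setOf_eq, Set.mem_union]
    tauto
  rw [hU]
  rw [Set.ncard_union_eq ?_ (cset_finite x ℓ n S) (cset_finite x ℓ n T)]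
  · push_cast; ring
  · exact Set.disjoint_left.mpr fun i hi hi' => hd.le_bot ⟨hi.2, hi'.2⟩ |>.elim

lemma emp_univ (n : ℕ) (h : 0 < ℓ n) : emp x ℓ n Set.univ = 1 := by
  have : cset x ℓ n Set.univ = ↑(Finset.range (ℓ n)) := by
    ext i; simp [cset]
  rw [emp, this, Set.ncard_coe_finset, Finset.card_range, div_self (by positivity)]

lemma emp_empty (n : ℕ) : emp x ℓ n ∅ = 0 := by
  have : cset x ℓ n ∅ = ∅ := by ext i; simp [cset]
  simp [emp, this]

lemma emp_of_disjoint {X : Set (ℤ → Bool)} (hXs : shift '' X = X) (hx : ∀ n, x n ∈ X)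
    {S : Set (ℤ → Bool)} (hS : S ∩ X = ∅) (n : ℕ) : emp x ℓ n S = 0 := by
  have : cset x ℓ n S = ∅ := by
    ext i
    simp only [cset, Set.mem_setOf_eq, Set.mem_empty_iff_false, iff_false, not_and]
    intro _ hmem
    exact absurd (Set.mem_inter hmem (iterate_mem hXs (hx n) i)) (by rw [hS]; exact id)
  simp [emp, this]

/-- the key near-invariance of empirical frequencies under the shift -/
lemma emp_shift_bound (n : ℕ) (S : Set (ℤ → Bool)) :
    |emp x ℓ n (shift ⁻¹' S) - emp x ℓ n S| ≤ 2 / (ℓ n : ℝ) := by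
  rcases Nat.eq_zero_or_pos (ℓ n) with h | h
  · simp [emp, h]
  set L := ℓ n
  set A := cset x ℓ n (shift ⁻¹' S) with hA
  set B := cset x ℓ n S with hB
  have hmemA : ∀ i, i ∈ A ↔ i < L ∧ shift^[i+1] (x n) ∈ S := by
    intro i
    rw [hA]
    simp only [cset, Set.mem_setOf_eq, Set.mem_preimage]
    rw [Function.iterate_succ', Function.comp_apply]
  have hfA : A.Finite := cset_finite x ℓ n _
  have hfB : B.Finite := cset_finite x ℓ n _
  -- compare both with C := {i | 0 < i ∧ i < L ∧ shift^[i] (x n) ∈ S}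
  have key1 : A.ncard ≤ B.ncard + 1 := by
    have himg : (fun i => i + 1) '' A ⊆ B ∪ {L} := by
      rintro j ⟨i, hi, rfl⟩
      rw [hmemA] at hi
      rcases Nat.lt_or_ge (i+1) L with hlt | hge
      · exact Or.inl ⟨hlt, hi.2⟩
      · right; have : i + 1 = L := by omega
        simp [this]
    calc A.ncard = ((fun i => i + 1) '' A).ncard :=
          (Set.ncard_image_of_injective _ (add_left_injective 1)).symm
      _ ≤ (B ∪ {L}).ncard := Set.ncard_le_ncard himg (hfB.union (Set.finite_singleton _))
      _ ≤ B.ncard + ({L} : Set ℕ).ncard := Set.ncard_union_le _ _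
      _ = B.ncard + 1 := by rw [Set.ncard_singleton]
  have key2 : B.ncard ≤ A.ncard + 1 := by
    have himg : B ⊆ ((fun i => i + 1) '' A) ∪ {0} := by
      intro j hj
      rcases Nat.eq_zero_or_pos j with rfl | hpos
      · exact Or.inr rfl
      · left
        obtain ⟨hj1, hj2⟩ := hj
        obtain ⟨i, rfl⟩ : ∃ i, j = i + 1 := ⟨j - 1, by omega⟩
        refine ⟨i, ?_, rfl⟩
        rw [hmemA]
        exact ⟨by omega, hj2⟩
    calc B.ncard ≤ (((fun i => i + 1) '' A) ∪ {0}).ncard :=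
          Set.ncard_le_ncard himg ((hfA.image _).union (Set.finite_singleton _))
      _ ≤ ((fun i => i + 1) '' A).ncard + ({0} : Set ℕ).ncard := Set.ncard_union_le _ _
      _ = A.ncard + 1 := by
          rw [Set.ncard_image_of_injective _ (add_left_injective 1), Set.ncard_singleton]
  have h1 : (A.ncard : ℝ) ≤ (B.ncard : ℝ) + 1 := by exact_mod_cast key1
  have h2 : (B.ncard : ℝ) ≤ (A.ncard : ℝ) + 1 := by exact_mod_cast key2
  have habs : |(A.ncard : ℝ) - (B.ncard : ℝ)| ≤ 2 := by
    rw [abs_le]; constructor <;> linarith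
  rw [emp, emp, ← hA, ← hB, div_sub_div_same, abs_div,
    abs_of_nonneg (by positivity : (0:ℝ) ≤ (L:ℝ)),
    div_le_div_iff_of_pos_right (by positivity : (0:ℝ) < (L:ℝ))]
  exact habs

/-! ### Limits along an ultrafilter -/

/-- a fixed ultrafilter extending `atTop` -/
noncomputable def U : Ultrafilter ℕ := Ultrafilter.of atTop

lemma U_le_atTop : (U : Filter ℕ) ≤ atTop := Ultrafilter.of_le _

/-- the limiting frequency of a set along the ultrafilter -/
noncomputable def G (S : Set (ℤ → Bool)) : ℝ := limUnder (U : Filter ℕ) (fun n => emp x ℓ n S)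

lemma tendsto_emp (S : Set (ℤ → Bool)) :
    Tendsto (fun n => emp x ℓ n S) (U : Filter ℕ) (𝓝 (G x ℓ S)) := by
  apply tendsto_nhds_limUnder
  have hle : (Ultrafilter.map (fun n => emp x ℓ n S) U : Filter ℝ) ≤ 𝓟 (Set.Icc 0 1) := by
    rw [le_principal_iff]
    apply Filter.mem_map.mpr
    apply Filter.univ_mem'
    intro n
    exact ⟨emp_nonneg x ℓ n S, emp_le_one x ℓ n S⟩
  obtain ⟨r, -, hr⟩ := (isCompact_Icc (a := (0:ℝ)) (b := 1)).ultrafilter_le_nhds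
    (Ultrafilter.map (fun n => emp x ℓ n S) U) hle
  exact ⟨r, hr⟩

lemma G_eq_of_tendsto {S : Set (ℤ → Bool)} {r : ℝ}
    (h : Tendsto (fun n => emp x ℓ n S) (U : Filter ℕ) (𝓝 r)) : G x ℓ S = r :=
  tendsto_nhds_unique (tendsto_emp x ℓ S) h

lemma G_nonneg (S : Set (ℤ → Bool)) : 0 ≤ G x ℓ S :=
  ge_of_tendsto' (tendsto_emp x ℓ S) (fun n => emp_nonneg x ℓ n S)

lemma G_mono {S T : Set (ℤ → Bool)} (hST : S ⊆ T) : G x ℓ S ≤ G x ℓ T :=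
  le_of_tendsto_of_tendsto' (tendsto_emp x ℓ S) (tendsto_emp x ℓ T)
    (fun n => emp_mono x ℓ n hST)

lemma G_union_le (S T : Set (ℤ → Bool)) : G x ℓ (S ∪ T) ≤ G x ℓ S + G x ℓ T :=
  le_of_tendsto_of_tendsto' (tendsto_emp x ℓ (S ∪ T))
    ((tendsto_emp x ℓ S).add (tendsto_emp x ℓ T)) (fun n => emp_union_le x ℓ n S T)

lemma G_add {S T : Set (ℤ → Bool)} (hd : Disjoint S T) :
    G x ℓ (S ∪ T) = G x ℓ S + G x ℓ T := by
  refine G_eq_of_tendsto x ℓ ?_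
  have : (fun n => emp x ℓ n (S ∪ T)) = fun n => emp x ℓ n S + emp x ℓ n T :=
    funext fun n => emp_add x ℓ n hd
  rw [this]
  exact (tendsto_emp x ℓ S).add (tendsto_emp x ℓ T)

lemma G_empty : G x ℓ ∅ = 0 := by
  refine G_eq_of_tendsto x ℓ ?_
  have : (fun n => emp x ℓ n ∅) = fun _ => (0:ℝ) := funext fun n => emp_empty x ℓ n
  rw [this]; exact tendsto_const_nhds

variable (hl : ∀ n, n + 1 ≤ ℓ n)

include hl

lemma G_univ : G x ℓ Set.univ = 1 := by
  refine G_eq_of_tendsto x ℓ ?_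
  have : (fun n => emp x ℓ n Set.univ) = fun _ => (1:ℝ) :=
    funext fun n => emp_univ x ℓ n (by have := hl n; omega)
  rw [this]; exact tendsto_const_nhds

lemma tendsto_inv_ℓ (c : ℝ) : Tendsto (fun n => c / (ℓ n : ℝ)) (U : Filter ℕ) (𝓝 0) := by
  apply Tendsto.mono_left ?_ U_le_atTop
  apply Tendsto.div_atTop tendsto_const_nhds
  apply tendsto_natCast_atTop_atTop.comp
  apply tendsto_atTop_mono (fun n => by have := hl n; omega : ∀ n, n ≤ ℓ n) tendsto_id

lemma G_shift (S : Set (ℤ → Bool)) : G x ℓ (shift ⁻¹' S) = G x ℓ S := by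
  refine G_eq_of_tendsto x ℓ ?_
  have hdiff : Tendsto (fun n => emp x ℓ n (shift ⁻¹' S) - emp x ℓ n S) (U : Filter ℕ) (𝓝 0) := by
    apply squeeze_zero_norm (fun n => emp_shift_bound x ℓ n S) (tendsto_inv_ℓ ℓ hl 2)
  have := hdiff.add (tendsto_emp x ℓ S)
  simpa using this

omit hl

lemma G_of_disjoint {X : Set (ℤ → Bool)} (hXs : shift '' X = X) (hx : ∀ n, x n ∈ X)
    {S : Set (ℤ → Bool)} (hS : S ∩ X = ∅) : G x ℓ S = 0 := by
  refine G_eq_of_tendsto x ℓ ?_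
  have : (fun n => emp x ℓ n S) = fun _ => (0:ℝ) :=
    funext fun n => emp_of_disjoint x ℓ hXs hx hS n
  rw [this]; exact tendsto_const_nhds

lemma G_biUnion_le (s : Finset ℕ) (D : ℕ → Set (ℤ → Bool)) :
    G x ℓ (⋃ n ∈ s, D n) ≤ ∑ n ∈ s, G x ℓ (D n) := by
  classical
  induction s using Finset.induction with
  | empty => simp [G_empty]
  | insert _ _ hni ih =>
    rename_i a s
    rw [Finset.set_biUnion_insert, Finset.sum_insert hni]
    exact (G_union_le x ℓ _ _).trans (by linarith)

/-! ### The outer measure and the measure -/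

/-- premeasure: infimum of limiting frequencies of clopen supersets -/
noncomputable def m0 (S : Set (ℤ → Bool)) : ℝ≥0∞ :=
  ⨅ (D : Set (ℤ → Bool)) (_ : IsClopen D) (_ : S ⊆ D), ENNReal.ofReal (G x ℓ D)

lemma m0_le {S D : Set (ℤ → Bool)} (hD : IsClopen D) (hSD : S ⊆ D) :
    m0 x ℓ S ≤ ENNReal.ofReal (G x ℓ D) := by
  rw [m0]
  exact iInf_le_of_le D (iInf_le_of_le hD (iInf_le_of_le hSD le_rfl))

lemma m0_empty : m0 x ℓ ∅ = 0 := by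
  refine le_antisymm ?_ zero_le
  have := m0_le x ℓ isClopen_empty (Set.Subset.refl ∅)
  rwa [G_empty, ENNReal.ofReal_zero] at this

lemma m0_lt_top (S : Set (ℤ → Bool)) : m0 x ℓ S < ⊤ :=
  lt_of_le_of_lt (m0_le x ℓ isClopen_univ (Set.subset_univ S)) ENNReal.ofReal_lt_top

omit hl in
/-- the key compactness estimate: countable covers cannot lose mass on clopen sets -/
lemma cover_bound {C : Set (ℤ → Bool)} (hC : IsClopen C) (t : ℕ → Set (ℤ → Bool))
    (ht : C ⊆ ⋃ n, t n) : ENNReal.ofReal (G x ℓ C) ≤ ∑' n, m0 x ℓ (t n) := by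
  apply ENNReal.le_of_forall_pos_le_add
  intro ε hε _
  obtain ⟨ε', hε'pos, hε'sum⟩ := ENNReal.exists_pos_sum_of_countable
    (by exact_mod_cast hε.ne' : (ε : ℝ≥0∞) ≠ 0) ℕ
  have hchoice : ∀ n, ∃ D : Set (ℤ → Bool), IsClopen D ∧ t n ⊆ D ∧
      ENNReal.ofReal (G x ℓ D) ≤ m0 x ℓ (t n) + ε' n := by
    intro n
    have hlt : m0 x ℓ (t n) < m0 x ℓ (t n) + ε' n :=
      ENNReal.lt_add_right (m0_lt_top x ℓ (t n)).ne (by exact_mod_cast (hε'pos n).ne')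
    rw [m0] at hlt
    simp only [iInf_lt_iff] at hlt
    obtain ⟨D, hD, hsub, hDlt⟩ := hlt
    exact ⟨D, hD, hsub, hDlt.le⟩
  choose D hDclopen hDsub hDbound using hchoice
  have hopen : ∀ n, IsOpen (D n) := fun n => (hDclopen n).isOpen
  have hcover : C ⊆ ⋃ n, D n := ht.trans (Set.iUnion_mono hDsub)
  obtain ⟨s, hs⟩ := (hC.isClosed.isCompact).elim_finite_subcover D hopen hcover
  calc ENNReal.ofReal (G x ℓ C)
      ≤ ENNReal.ofReal (G x ℓ (⋃ n ∈ s, D n)) :=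
        ENNReal.ofReal_le_ofReal (G_mono x ℓ hs)
    _ ≤ ENNReal.ofReal (∑ n ∈ s, G x ℓ (D n)) :=
        ENNReal.ofReal_le_ofReal (G_biUnion_le x ℓ s D)
    _ = ∑ n ∈ s, ENNReal.ofReal (G x ℓ (D n)) :=
        ENNReal.ofReal_sum_of_nonneg (fun n _ => G_nonneg x ℓ (D n))
    _ ≤ ∑ n ∈ s, (m0 x ℓ (t n) + ε' n) := Finset.sum_le_sum (fun n _ => hDbound n)
    _ ≤ ∑' n, (m0 x ℓ (t n) + ε' n) := ENNReal.sum_le_tsum s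
    _ = (∑' n, m0 x ℓ (t n)) + ∑' n, (ε' n : ℝ≥0∞) := ENNReal.tsum_add
    _ ≤ (∑' n, m0 x ℓ (t n)) + ε := by
        exact add_le_add_right hε'sum.le _

omit hl

/-- the outer measure induced by `m0` -/
noncomputable def mo : OuterMeasure (ℤ → Bool) :=
  OuterMeasure.ofFunction (m0 x ℓ) (m0_empty x ℓ)

lemma m0_split {C : Set (ℤ → Bool)} (hC : IsClopen C) (t : Set (ℤ → Bool)) :
    m0 x ℓ (t ∩ C) + m0 x ℓ (t \ C) ≤ m0 x ℓ t := by
  conv_rhs => rw [m0]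
  refine le_iInf fun D => le_iInf fun hD => le_iInf fun hsub => ?_
  have h1 : m0 x ℓ (t ∩ C) ≤ ENNReal.ofReal (G x ℓ (D ∩ C)) :=
    m0_le x ℓ (hD.inter hC) (Set.inter_subset_inter_left _ hsub)
  have h2 : m0 x ℓ (t \ C) ≤ ENNReal.ofReal (G x ℓ (D ∩ Cᶜ)) := by
    refine m0_le x ℓ (hD.inter hC.compl) ?_
    rw [Set.diff_eq]
    exact Set.inter_subset_inter_left _ hsub
  calc m0 x ℓ (t ∩ C) + m0 x ℓ (t \ C)
      ≤ ENNReal.ofReal (G x ℓ (D ∩ C)) + ENNReal.ofReal (G x ℓ (D ∩ Cᶜ)) := add_le_add h1 h2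
    _ = ENNReal.ofReal (G x ℓ (D ∩ C) + G x ℓ (D ∩ Cᶜ)) :=
        (ENNReal.ofReal_add (G_nonneg x ℓ _) (G_nonneg x ℓ _)).symm
    _ = ENNReal.ofReal (G x ℓ D) := by
        rw [← G_add x ℓ (disjoint_compl_right.mono Set.inter_subset_right Set.inter_subset_right),
          Set.inter_union_compl]

lemma isCaratheodory_clopen {C : Set (ℤ → Bool)} (hC : IsClopen C) :
    MeasurableSet[(mo x ℓ).caratheodory] C := by
  rw [OuterMeasure.isCaratheodory_iff_le]
  intro T
  conv_rhs => rw [mo, OuterMeasure.ofFunction_apply]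
  refine le_iInf fun t => le_iInf fun ht => ?_
  have h1 : (mo x ℓ) (T ∩ C) ≤ ∑' n, m0 x ℓ (t n ∩ C) := by
    rw [mo, OuterMeasure.ofFunction_apply]
    refine iInf_le_of_le (fun n => t n ∩ C) (iInf_le_of_le ?_ le_rfl)
    rw [← Set.iUnion_inter]
    exact Set.inter_subset_inter_left _ ht
  have h2 : (mo x ℓ) (T \ C) ≤ ∑' n, m0 x ℓ (t n \ C) := by
    rw [mo, OuterMeasure.ofFunction_apply]
    refine iInf_le_of_le (fun n => t n \ C) (iInf_le_of_le ?_ le_rfl)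
    exact fun y hy => by
      obtain ⟨hyT, hyC⟩ := hy
      obtain ⟨_, ⟨n, rfl⟩, hn⟩ := ht hyT
      exact Set.mem_iUnion.mpr ⟨n, hn, hyC⟩
  calc (mo x ℓ) (T ∩ C) + (mo x ℓ) (T \ C)
      ≤ (∑' n, m0 x ℓ (t n ∩ C)) + ∑' n, m0 x ℓ (t n \ C) := add_le_add h1 h2
    _ = ∑' n, (m0 x ℓ (t n ∩ C) + m0 x ℓ (t n \ C)) := ENNReal.tsum_add.symm
    _ ≤ ∑' n, m0 x ℓ (t n) := ENNReal.tsum_le_tsum (fun n => m0_split x ℓ hC (t n))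

lemma caratheodory_le : (inferInstance : MeasurableSpace (ℤ → Bool)) ≤ (mo x ℓ).caratheodory := by
  rw [measurableSpace_eq]
  refine MeasurableSpace.generateFrom_le ?_
  rintro s ⟨k, v, hv, rfl⟩
  exact isCaratheodory_clopen x ℓ (isClopen_cylSet _ _)

/-- the constructed measure -/
noncomputable def mu : Measure (ℤ → Bool) := (mo x ℓ).toMeasure (caratheodory_le x ℓ)

include hl

lemma mu_clopen {C : Set (ℤ → Bool)} (hC : IsClopen C) :
    mu x ℓ C = ENNReal.ofReal (G x ℓ C) := by
  rw [mu, toMeasure_apply _ _ hC.isOpen.measurableSet]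
  refine le_antisymm ?_ ?_
  · exact (OuterMeasure.ofFunction_le C).trans (m0_le x ℓ hC (Set.Subset.refl C))
  · rw [mo, OuterMeasure.ofFunction_apply]
    exact le_iInf fun t => le_iInf fun ht => cover_bound x ℓ hC t ht

lemma mu_univ : mu x ℓ Set.univ = 1 := by
  rw [mu_clopen x ℓ hl isClopen_univ, G_univ x ℓ hl, ENNReal.ofReal_one]

lemma mu_map_shift : Measure.map shift (mu x ℓ) = mu x ℓ := by
  haveI : IsProbabilityMeasure (mu x ℓ) := ⟨mu_univ x ℓ hl⟩
  haveI : IsProbabilityMeasure (Measure.map shift (mu x ℓ)) :=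
    Measure.isProbabilityMeasure_map measurable_shift.aemeasurable
  refine ext_of_generate_finite gen measurableSpace_eq isPiSystem_gen ?_ ?_
  · rintro s ⟨k, v, hv, rfl⟩
    rw [Measure.map_apply measurable_shift (measurableSet_cylSet _ _)]
    rw [shift_preimage_cylSet]
    rw [mu_clopen x ℓ hl (isClopen_cylSet _ _), mu_clopen x ℓ hl (isClopen_cylSet _ _)]
    congr 1
    rw [← shift_preimage_cylSet]
    exact G_shift x ℓ hl _
  · rw [Measure.map_apply measurable_shift MeasurableSet.univ]
    simp

lemma mu_compl {X : Set (ℤ → Bool)} (hXc : IsClosed X) (hXs : shift '' X = X)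
    (hx : ∀ n, x n ∈ X) : mu x ℓ Xᶜ = 0 := by
  classical
  set ι := {p : ℕ × List Bool // cylSet (-(p.1 : ℤ)) p.2 ⊆ Xᶜ} with hι
  have hsub : Xᶜ ⊆ ⋃ (p : ι), cylSet (-(p.1.1 : ℤ)) p.1.2 := by
    intro y hy
    obtain ⟨k, hk⟩ := exists_clopen_nbhd_in_open hXc.isOpen_compl hy
    exact Set.mem_iUnion.mpr ⟨⟨(k, patt y (-(k:ℤ)) (2*k)), hk⟩, mem_cylSet_patt_self _ _ _⟩
  refine measure_mono_null hsub ?_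
  refine measure_iUnion_null fun p => ?_
  rw [mu_clopen x ℓ hl (isClopen_cylSet _ _)]
  have hdisj : cylSet (-(p.1.1 : ℤ)) p.1.2 ∩ X = ∅ :=
    Set.eq_empty_iff_forall_notMem.mpr fun z hz => p.2 hz.1 hz.2
  rw [G_of_disjoint x ℓ hXs hx hdisj, ENNReal.ofReal_zero]


end Emp

lemma measurable_iterate (i : ℕ) : Measurable (shift^[i]) := by
  induction i with
  | zero => simpa using measurable_id
  | succ k ih => rw [Function.iterate_succ]; exact ih.comp measurable_shift

lemma iterate_mem_cylSet_iff (x : ℤ → Bool) (i : ℕ) (w : List Bool) :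
    shift^[i] x ∈ cylSet 0 w ↔
      ∀ j, (hj : j < w.length) → x ((i : ℤ) + (j : ℤ)) = w.getD j false := by
  rw [mem_cylSet_iff_getD, shift_iterate]
  constructor
  · intro h j hj
    have h2 : x ((0:ℤ) + (j:ℤ) + (i:ℤ)) = w.getD j false := h j hj
    rwa [show (0:ℤ) + (j:ℤ) + (i:ℤ) = (i:ℤ) + (j:ℤ) by ring] at h2
  · intro h j hj
    show x ((0:ℤ) + (j:ℤ) + (i:ℤ)) = w.getD j false
    rw [show (0:ℤ) + (j:ℤ) + (i:ℤ) = (i:ℤ) + (j:ℤ) by ring]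
    exact h j hj

/-- the central combinatorial identity -/
lemma occSet_patt {X : Set (ℤ → Bool)} (hXs : shift '' X = X) {x : ℤ → Bool} (hx : x ∈ X)
    {w : List Bool} (hw : 1 ≤ w.length) (n : ℕ) :
    {i | occursAt w (patt x 0 (n + w.length - 1)) i} =
      {i | i < n ∧ shift^[i] x ∈ cylinder X w} := by
  ext i
  simp only [Set.mem_setOf_eq, occursAt_iff, patt_length]
  rw [cylinder_eq]
  constructor
  · rintro ⟨hle, h⟩
    have hin : i < n := by omega
    refine ⟨hin, iterate_mem hXs hx i, ?_⟩
    rw [iterate_mem_cylSet_iff]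
    intro j hj
    have := h j hj
    rw [patt_getD x 0 _ (i + j) (by omega)] at this
    rw [← this]
    congr 1
    push_cast
    ring
  · rintro ⟨hin, -, hmem⟩
    rw [iterate_mem_cylSet_iff] at hmem
    refine ⟨by omega, fun j hj => ?_⟩
    have := hmem j hj
    rw [patt_getD x 0 _ (i + j) (by omega)]
    rw [← this]
    congr 1
    push_cast
    ring

lemma patt_mem_lang {X : Set (ℤ → Bool)} {x : ℤ → Bool} (hx : x ∈ X) (m : ℕ) :
    (cylinder X (patt x 0 m)).Nonempty := by
  rw [cylinder_eq]
  exact ⟨x, hx, mem_cylSet_patt_self x 0 m⟩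

lemma sum_indicator_eq {X : Set (ℤ → Bool)} (hXs : shift '' X = X) {x : ℤ → Bool} (hx : x ∈ X)
    {w : List Bool} (hw : 1 ≤ w.length) (n : ℕ) :
    ∑ i ∈ Finset.range n, (cylinder X w).indicator (1 : (ℤ → Bool) → ℝ≥0∞) (shift^[i] x) =
      (occCount w (patt x 0 (n + w.length - 1)) : ℝ≥0∞) := by
  classical
  have h1 : ∀ i, (cylinder X w).indicator (1 : (ℤ → Bool) → ℝ≥0∞) (shift^[i] x) =
      if shift^[i] x ∈ cylinder X w then 1 else 0 := fun i => Set.indicator_apply _ _ _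
  simp only [h1]
  rw [Finset.sum_boole]
  rw [occCount, occSet_patt hXs hx hw n]
  have : {i | i < n ∧ shift^[i] x ∈ cylinder X w} =
      ↑((Finset.range n).filter fun i => shift^[i] x ∈ cylinder X w) := by
    ext i; simp
  rw [this, Set.ncard_coe_finset]

/-- Main lemma: any invariant probability measure gives cylinders their frequency. -/
theorem freq_measure {X : Set (ℤ → Bool)} (hXc : IsClosed X) (hXs : shift '' X = X)
    {μ : Measure (ℤ → Bool)} (hprob : IsProbabilityMeasure μ) (hXnull : μ Xᶜ = 0)
    (hinv : Measure.map shift μ = μ) {w : List Bool} (hw : 1 ≤ w.length) {δ : ℝ}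
    (hδ : 0 ≤ δ) (hfreq : FreqTo X w δ) : μ (cylinder X w) = ENNReal.ofReal δ := by
  classical
  set c := w.length with hc
  set S := cylinder X w with hS
  have hSm : MeasurableSet S := by
    rw [hS, cylinder_eq]
    exact hXc.measurableSet.inter (measurableSet_cylSet 0 w)
  have hStop : μ S ≠ ⊤ := (measure_lt_top μ S).ne
  set r := (μ S).toReal with hr
  have hrS : μ S = ENNReal.ofReal r := (ENNReal.ofReal_toReal hStop).symm
  have hrnn : 0 ≤ r := ENNReal.toReal_nonneg
  have hpre : ∀ i, μ (shift^[i] ⁻¹' S) = μ S := by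
    intro i
    induction i with
    | zero => simp
    | succ k ih =>
      rw [Function.iterate_succ, Set.preimage_comp]
      have hTm : MeasurableSet (shift^[k] ⁻¹' S) := measurable_iterate k hSm
      calc μ (shift ⁻¹' (shift^[k] ⁻¹' S)) = (Measure.map shift μ) (shift^[k] ⁻¹' S) :=
            (Measure.map_apply measurable_shift hTm).symm
        _ = μ (shift^[k] ⁻¹' S) := by rw [hinv]
        _ = μ S := ih
  have key : ∀ n : ℕ,
      ∫⁻ x, ∑ i ∈ Finset.range n, S.indicator (1 : (ℤ → Bool) → ℝ≥0∞) (shift^[i] x) ∂μ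
        = n * μ S := by
    intro n
    have hmeas : ∀ i, Measurable fun x => S.indicator (1 : (ℤ → Bool) → ℝ≥0∞) (shift^[i] x) :=
      fun i => (measurable_one.indicator hSm).comp (measurable_iterate i)
    rw [lintegral_finset_sum _ (fun i _ => hmeas i)]
    have : ∀ i, ∫⁻ x, S.indicator (1 : (ℤ → Bool) → ℝ≥0∞) (shift^[i] x) ∂μ = μ S := by
      intro i
      have heq : ∀ x, S.indicator (1 : (ℤ → Bool) → ℝ≥0∞) (shift^[i] x) =
          (shift^[i] ⁻¹' S).indicator (1 : (ℤ → Bool) → ℝ≥0∞) x := by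
        intro x
        simp [Set.indicator_apply, Set.mem_preimage]
      simp only [heq]
      rw [lintegral_indicator_one (measurable_iterate i hSm)]
      exact hpre i
    simp only [this]
    rw [Finset.sum_const, Finset.card_range, nsmul_eq_mul]
  have hae : ∀ᵐ x ∂μ, x ∈ X := by
    rw [ae_iff]
    simpa [Set.compl_def] using hXnull
  -- the two-sided bound for every ε and large n
  have bound : ∀ ε : ℝ, 0 < ε → ∃ N : ℕ, 1 ≤ N ∧ ∀ n : ℕ, N ≤ n →
      (n + c - 1 : ℕ) * (δ - ε) ≤ n * r ∧ n * r ≤ (n + c - 1 : ℕ) * (δ + ε) := by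
    intro ε hε
    obtain ⟨N, hN1, hN⟩ := hfreq ε hε
    refine ⟨N, hN1, fun n hn => ?_⟩
    set m := n + c - 1 with hm
    have hmN : N ≤ m := by omega
    have hm1 : 1 ≤ m := by omega
    have hmpos : (0:ℝ) < (m:ℝ) := by exact_mod_cast hm1
    have haepoint : ∀ᵐ x ∂μ,
        ENNReal.ofReal ((m:ℝ) * (δ - ε)) ≤
          ∑ i ∈ Finset.range n, S.indicator (1 : (ℤ → Bool) → ℝ≥0∞) (shift^[i] x) ∧
        ∑ i ∈ Finset.range n, S.indicator (1 : (ℤ → Bool) → ℝ≥0∞) (shift^[i] x) ≤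
          ENNReal.ofReal ((m:ℝ) * (δ + ε)) := by
      refine hae.mono fun x hx => ?_
      rw [sum_indicator_eq hXs hx hw n]
      have hulang := patt_mem_lang hx m
      have hulen : N ≤ (patt x 0 m).length := by rw [patt_length]; exact hmN
      have := hN (patt x 0 m) hulang hulen
      rw [patt_length] at this
      set q := occCount w (patt x 0 m) with hq
      rw [abs_lt] at this
      obtain ⟨hlo, hhi⟩ := this
      have hql : (m:ℝ) * (δ - ε) < (q:ℝ) := by
        have h' : δ - ε < (q:ℝ)/(m:ℝ) := by linarith
        have := (lt_div_iff₀ hmpos).mp h'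
        linarith [this]
      have hqh : (q:ℝ) < (m:ℝ) * (δ + ε) := by
        have h' : (q:ℝ)/(m:ℝ) < δ + ε := by linarith
        have := (div_lt_iff₀ hmpos).mp h'
        linarith [this]
      constructor
      · calc ENNReal.ofReal ((m:ℝ) * (δ - ε)) ≤ ENNReal.ofReal (q:ℝ) :=
              ENNReal.ofReal_le_ofReal hql.le
          _ = (q : ℝ≥0∞) := by rw [ENNReal.ofReal_natCast]
      · calc (q : ℝ≥0∞) = ENNReal.ofReal (q:ℝ) := by rw [ENNReal.ofReal_natCast]
          _ ≤ ENNReal.ofReal ((m:ℝ) * (δ + ε)) := ENNReal.ofReal_le_ofReal hqh.le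
    have hup : (n : ℝ≥0∞) * μ S ≤ ENNReal.ofReal ((m:ℝ) * (δ + ε)) := by
      rw [← key n]
      calc ∫⁻ x, ∑ i ∈ Finset.range n, S.indicator (1 : (ℤ → Bool) → ℝ≥0∞) (shift^[i] x) ∂μ
          ≤ ∫⁻ _, ENNReal.ofReal ((m:ℝ) * (δ + ε)) ∂μ :=
            lintegral_mono_ae (haepoint.mono fun x hx => hx.2)
        _ = ENNReal.ofReal ((m:ℝ) * (δ + ε)) := by
            rw [lintegral_const, measure_univ, mul_one]
    have hlo : ENNReal.ofReal ((m:ℝ) * (δ - ε)) ≤ (n : ℝ≥0∞) * μ S := by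
      rw [← key n]
      calc ENNReal.ofReal ((m:ℝ) * (δ - ε))
          = ∫⁻ _, ENNReal.ofReal ((m:ℝ) * (δ - ε)) ∂μ := by
            rw [lintegral_const, measure_univ, mul_one]
        _ ≤ ∫⁻ x, ∑ i ∈ Finset.range n, S.indicator (1 : (ℤ → Bool) → ℝ≥0∞) (shift^[i] x) ∂μ :=
            lintegral_mono_ae (haepoint.mono fun x hx => hx.1)
    have hmul : (n : ℝ≥0∞) * μ S = ENNReal.ofReal ((n:ℝ) * r) := by
      rw [hrS, ← ENNReal.ofReal_natCast n, ← ENNReal.ofReal_mul (by positivity)]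
    rw [hmul] at hup hlo
    constructor
    · have := (ENNReal.ofReal_le_ofReal_iff (by positivity)).mp hlo
      linarith
    · have := (ENNReal.ofReal_le_ofReal_iff (by positivity : (0:ℝ) ≤ (m:ℝ) * (δ + ε))).mp hup
      linarith
  -- conclude r = δ
  have hrδ : r = δ := by
    have hge : ∀ ε : ℝ, 0 < ε → δ - ε ≤ r := by
      intro ε hε
      obtain ⟨N, hN1, hN⟩ := bound ε hε
      obtain ⟨h1, -⟩ := hN N le_rfl
      rcases le_or_gt (δ - ε) 0 with h | h
      · linarith
      · have hm : (N:ℝ) ≤ ((N + c - 1 : ℕ):ℝ) := by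
          have : N ≤ N + c - 1 := by omega
          exact_mod_cast this
        have hNpos : (0:ℝ) < (N:ℝ) := by exact_mod_cast hN1
        nlinarith
    have hle : ∀ ε : ℝ, 0 < ε → r ≤ δ + 2 * ε := by
      intro ε hε
      obtain ⟨N, hN1, hN⟩ := bound ε hε
      -- choose n large: n ≥ N and (c-1)*(δ+ε) ≤ n * ε
      obtain ⟨n, hnN, hnbig⟩ : ∃ n : ℕ, N ≤ n ∧ ((c:ℝ) - 1) * (δ + ε) ≤ (n:ℝ) * ε := by
        obtain ⟨n, hn⟩ := exists_nat_ge (max (N:ℝ) (((c:ℝ) - 1) * (δ + ε) / ε))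
        refine ⟨n, ?_, ?_⟩
        · exact_mod_cast le_trans (le_max_left _ _) hn
        · have := le_trans (le_max_right ((N:ℝ)) _) hn
          rw [div_le_iff₀ hε] at this
          linarith
      obtain ⟨-, h2⟩ := hN n hnN
      have hnpos : (0:ℝ) < (n:ℝ) := by
        have : 1 ≤ n := le_trans hN1 hnN
        exact_mod_cast this
      have hmcast : ((n + c - 1 : ℕ):ℝ) = (n:ℝ) + (c:ℝ) - 1 := by
        have h1c : 1 ≤ c := hw
        push_cast [Nat.cast_sub (by omega : 1 ≤ n + c)]
        ring
      rw [hmcast] at h2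
      nlinarith
    have h1 : r ≤ δ := by
      by_contra h
      push_neg at h
      have := hle ((r - δ)/4) (by linarith)
      linarith
    have h2 : δ ≤ r := by
      by_contra h
      push_neg at h
      have := hge ((δ - r)/2) (by linarith)
      linarith
    linarith
  rw [hrS, hrδ]


/-! ## the nil word -/

lemma occCount_nil (u : List Bool) : occCount [] u = u.length + 1 := by
  have h : {i | occursAt [] u i} = ↑(Finset.range (u.length + 1)) := by
    ext i
    simp only [occursAt, List.length_nil, add_zero, List.take_zero, and_true,
      Finset.coe_range, Set.mem_Iio, Set.mem_setOf_eq]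
    omega
  rw [occCount, h, Set.ncard_coe_finset, Finset.card_range]

lemma freqTo_nil (X : Set (ℤ → Bool)) : FreqTo X [] 1 := by
  intro ε hε
  obtain ⟨n₀, hn₀⟩ := exists_nat_ge (1/ε)
  refine ⟨n₀ + 1, by omega, fun u _ hlen => ?_⟩
  have hL : (0:ℝ) < (u.length : ℝ) := by
    have : 1 ≤ u.length := by omega
    exact_mod_cast this
  rw [occCount_nil]
  have : ((u.length + 1 : ℕ) : ℝ) / (u.length : ℝ) - 1 = 1 / (u.length : ℝ) := by
    field_simp
    simp
  rw [this, abs_of_pos (by positivity)]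
  rw [div_lt_iff₀ hL]
  have h1 : (1:ℝ)/ε ≤ n₀ := hn₀
  have h2 : (n₀ : ℝ) + 1 ≤ (u.length : ℝ) := by exact_mod_cast hlen
  rw [div_le_iff₀ hε] at h1
  nlinarith

lemma freqTo_nil_unique {X : Set (ℤ → Bool)} (hne : X.Nonempty) {δ : ℝ}
    (hf : FreqTo X [] δ) : δ = 1 := by
  obtain ⟨x₀, hx₀⟩ := hne
  have key : ∀ ε : ℝ, 0 < ε → |δ - 1| < 2 * ε := by
    intro ε hε
    obtain ⟨N, hN1, hN⟩ := hf ε hε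
    obtain ⟨n₀, hn₀⟩ := exists_nat_ge (1/ε)
    set n := max N (n₀ + 1) with hn
    have hn1 : 1 ≤ n := le_trans hN1 (le_max_left _ _)
    have := hN (patt x₀ 0 n) (patt_mem_lang hx₀ n) (by rw [patt_length]; exact le_max_left _ _)
    rw [occCount_nil, patt_length] at this
    have hnpos : (0:ℝ) < (n:ℝ) := by exact_mod_cast hn1
    have hfrac : ((n + 1 : ℕ) : ℝ) / (n : ℝ) - 1 = 1 / (n:ℝ) := by field_simp; simp
    have hsmall : 1 / (n:ℝ) ≤ ε := by
      rw [div_le_iff₀ hnpos]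
      rw [div_le_iff₀ hε] at hn₀
      have : (n₀:ℝ) + 1 ≤ (n:ℝ) := by
        have : n₀ + 1 ≤ n := le_max_right _ _
        exact_mod_cast this
      nlinarith
    have habs : |((n + 1 : ℕ) : ℝ) / (n : ℝ) - δ| < ε := this
    calc |δ - 1| = |(δ - ((n + 1 : ℕ) : ℝ) / (n : ℝ)) + (((n + 1 : ℕ) : ℝ) / (n : ℝ) - 1)| := by
          ring_nf
      _ ≤ |δ - ((n + 1 : ℕ) : ℝ) / (n : ℝ)| + |((n + 1 : ℕ) : ℝ) / (n : ℝ) - 1| := abs_add_le _ _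
      _ < ε + ε := by
          have h1 : |δ - ((n + 1 : ℕ) : ℝ) / (n : ℝ)| < ε := by rwa [abs_sub_comm] at habs
          have h2 : |((n + 1 : ℕ) : ℝ) / (n : ℝ) - 1| ≤ ε := by
            rw [hfrac, abs_of_pos (by positivity : (0:ℝ) < 1/(n:ℝ))]
            exact hsmall
          exact add_lt_add_of_lt_of_le h1 h2
      _ = 2 * ε := by ring
  by_contra h
  have hpos : 0 < |δ - 1| := abs_pos.mpr (sub_ne_zero.mpr h)
  have := key (|δ - 1|/4) (by linarith)
  linarith

/-! ## cylinder values of invariant measures -/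

lemma cyl_value {X : Set (ℤ → Bool)} (hX : IsSubshift X) {μ : Measure (ℤ → Bool)}
    (hμ : InvariantProbOn X μ) {w : List Bool} {δ : ℝ} (hne : (cylinder X w).Nonempty)
    (hδ : 0 ≤ δ) (hf : FreqTo X w δ) : μ (cylinder X w) = ENNReal.ofReal δ := by
  obtain ⟨hprob, hXnull, hinv⟩ := hμ
  rcases Nat.eq_zero_or_pos w.length with hw | hw
  · have hwnil : w = [] := List.length_eq_zero_iff.mp hw
    subst hwnil
    have hδ1 : δ = 1 := freqTo_nil_unique hX.1 hf
    subst hδ1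
    have : cylinder X [] = X := by
      rw [cylinder_eq]
      have : cylSet 0 [] = Set.univ := by
        ext z; constructor
        · intro _; trivial
        · intro _ j; exact absurd j.isLt (by simp)
      rw [this, Set.inter_univ]
    rw [this]
    have : μ X = μ Set.univ := by
      rw [← measure_inter_conull (s := Set.univ) hXnull, Set.univ_inter]
    rw [this, measure_univ, ENNReal.ofReal_one]
  · exact freq_measure hX.2.1 hX.2.2 hprob hXnull hinv hw hδ hf

lemma measure_cylSet_shift {μ : Measure (ℤ → Bool)} (hinv : Measure.map shift μ = μ)
    (a : ℤ) (v : List Bool) : μ (cylSet (a + 1) v) = μ (cylSet a v) := by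
  rw [← shift_preimage_cylSet, ← Measure.map_apply measurable_shift (measurableSet_cylSet a v),
    hinv]

lemma measure_cylSet_center {μ : Measure (ℤ → Bool)} (hinv : Measure.map shift μ = μ)
    (k : ℕ) (v : List Bool) : μ (cylSet (-(k:ℤ)) v) = μ (cylSet 0 v) := by
  have key : ∀ j : ℕ, ∀ a : ℤ, μ (cylSet (a + (j:ℕ)) v) = μ (cylSet a v) := by
    intro j
    induction j with
    | zero => intro a; simp
    | succ i ih =>
      intro a
      have h1 : (a + ((i+1 : ℕ):ℤ)) = (a + 1) + (i:ℕ) := by push_cast; ring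
      rw [h1, ih (a + 1), measure_cylSet_shift hinv]
  have := key k (-(k:ℤ))
  rw [show -(k:ℤ) + (k:ℕ) = 0 by push_cast; ring] at this
  exact this.symm

open Classical in
lemma measure_gen_eq {X : Set (ℤ → Bool)} (hX : IsSubshift X) {μ : Measure (ℤ → Bool)}
    (hμ : InvariantProbOn X μ)
    (hfreqs : ∀ w : List Bool, (cylinder X w).Nonempty → ∃ δ : ℝ, 0 ≤ δ ∧ FreqTo X w δ)
    (k : ℕ) (v : List Bool) :
    μ (cylSet (-(k:ℤ)) v) =
      if h : (cylinder X v).Nonempty then ENNReal.ofReal (Classical.choose (hfreqs v h)) else 0 := by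
  obtain ⟨hprob, hXnull, hinv⟩ := hμ
  rw [measure_cylSet_center hinv]
  have hcyl : μ (cylSet 0 v) = μ (cylinder X v) := by
    rw [cylinder_eq, Set.inter_comm]
    exact (measure_inter_conull hXnull).symm
  rw [hcyl]
  split_ifs with h
  · obtain ⟨hδ0, hδf⟩ := Classical.choose_spec (hfreqs v h)
    exact cyl_value hX ⟨hprob, hXnull, hinv⟩ h hδ0 hδf
  · rw [Set.not_nonempty_iff_eq_empty.mp h]
    exact measure_empty

/-- uniqueness of the invariant measure given uniform frequencies -/
lemma unique_inv {X : Set (ℤ → Bool)} (hX : IsSubshift X)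
    (hfreqs : ∀ w : List Bool, (cylinder X w).Nonempty → ∃ δ : ℝ, 0 ≤ δ ∧ FreqTo X w δ)
    {μ ν : Measure (ℤ → Bool)} (hμ : InvariantProbOn X μ) (hν : InvariantProbOn X ν) :
    μ = ν := by
  haveI : IsProbabilityMeasure μ := hμ.1
  refine ext_of_generate_finite gen measurableSpace_eq isPiSystem_gen ?_ ?_
  · rintro s ⟨k, v, hv, rfl⟩
    rw [measure_gen_eq hX hμ hfreqs k v, measure_gen_eq hX hν hfreqs k v]
  · rw [hμ.1.measure_univ, hν.1.measure_univ]

/-! ## comparison of empirical frequency with occurrence counts -/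

lemma cset_finite' (x : ℕ → ℤ → Bool) (ℓ : ℕ → ℕ) (n : ℕ) (S : Set (ℤ → Bool)) :
    (cset x ℓ n S).Finite :=
  (Set.finite_lt_nat (ℓ n)).subset fun _ hi => hi.1

lemma cset_occ_bounds {X : Set (ℤ → Bool)} {u : ℕ → List Bool} {x : ℕ → ℤ → Bool}
    (hx : ∀ n, x n ∈ cylinder X (u n)) {w : List Bool} (hw : 1 ≤ w.length) (n : ℕ) :
    occCount w (u n) ≤ (cset x (fun n => (u n).length) n (cylSet 0 w)).ncard ∧
      (cset x (fun n => (u n).length) n (cylSet 0 w)).ncard ≤ occCount w (u n) + w.length := by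
  classical
  set L := (u n).length with hL
  set c := w.length with hc
  have hxu : ∀ t, (ht : t < L) → x n ((t:ℕ) : ℤ) = (u n).getD t false := by
    have h1 := (cylinder_eq X (u n)) ▸ hx n
    have h2 := (mem_cylSet_iff_getD 0 (u n) (x n)).mp h1.2
    intro t ht
    have := h2 t ht
    rwa [zero_add] at this
  set A := cset x (fun n => (u n).length) n (cylSet 0 w) with hA
  set O := {i | occursAt w (u n) i} with hO
  have hmemA : ∀ i, i ∈ A ↔ i < L ∧ ∀ j, (hj : j < c) → x n ((i:ℤ) + (j:ℤ)) = w.getD j false := by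
    intro i
    rw [hA]
    show i < L ∧ shift^[i] (x n) ∈ cylSet 0 w ↔ _
    rw [iterate_mem_cylSet_iff]
  have hmemO : ∀ i, i ∈ O ↔ i + c ≤ L ∧ ∀ j, (hj : j < c) →
      x n (((i + j : ℕ):ℕ) : ℤ) = w.getD j false := by
    intro i
    rw [hO, Set.mem_setOf_eq, occursAt_iff]
    refine and_congr_right fun hle => ?_
    refine forall_congr' fun j => forall_congr' fun hj => ?_
    rw [hxu (i + j) (by omega)]
  have hcast : ∀ i j : ℕ, (((i + j : ℕ):ℕ) : ℤ) = (i:ℤ) + (j:ℤ) := by intro i j; push_cast; ring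
  have hOA : O ⊆ A := by
    intro i hi
    rw [hmemO] at hi
    rw [hmemA]
    exact ⟨by omega, fun j hj => by rw [← hcast]; exact hi.2 j hj⟩
  have hfA : A.Finite := cset_finite' _ _ _ _
  have hfO : O.Finite := occSet_finite w (u n)
  constructor
  · rw [occCount, ← hO]
    exact Set.ncard_le_ncard hOA hfA
  · set T := (↑(Finset.Ico (L + 1 - c) L) : Set ℕ) with hT
    have hAOT : A ⊆ O ∪ T := by
      intro i hi
      rw [hmemA] at hi
      rcases le_or_gt (i + c) L with hle | hgt
      · left
        rw [hmemO]
        exact ⟨hle, fun j hj => by rw [hcast]; exact hi.2 j hj⟩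
      · right
        rw [hT]
        simp only [Finset.coe_Ico, Set.mem_Ico]
        omega
    calc A.ncard ≤ (O ∪ T).ncard := Set.ncard_le_ncard hAOT (hfO.union (Finset.finite_toSet _))
      _ ≤ O.ncard + T.ncard := Set.ncard_union_le _ _
      _ ≤ occCount w (u n) + c := by
          rw [occCount, ← hO, hT, Set.ncard_coe_finset, Nat.card_Ico]
          omega

lemma emp_occ_abs {X : Set (ℤ → Bool)} {u : ℕ → List Bool} {x : ℕ → ℤ → Bool}
    (hx : ∀ n, x n ∈ cylinder X (u n)) {w : List Bool} (hw : 1 ≤ w.length) (n : ℕ) :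
    |(occCount w (u n) : ℝ) / (((u n).length : ℕ) : ℝ) - emp x (fun n => (u n).length) n (cylSet 0 w)|
      ≤ (w.length : ℝ) / (((u n).length : ℕ) : ℝ) := by
  obtain ⟨h1, h2⟩ := cset_occ_bounds hx hw n
  rw [emp]
  set L := (u n).length
  rcases Nat.eq_zero_or_pos L with h | h
  · simp [h]
  have hLpos : (0:ℝ) < (L:ℝ) := by exact_mod_cast h
  rw [div_sub_div_same, abs_div, abs_of_pos hLpos, div_le_div_iff_of_pos_right hLpos]
  have c1 : ((occCount w (u n)):ℝ) ≤ ((cset x (fun n => (u n).length) n (cylSet 0 w)).ncard : ℝ) := by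
    exact_mod_cast h1
  have c2 : ((cset x (fun n => (u n).length) n (cylSet 0 w)).ncard : ℝ) ≤
      ((occCount w (u n)):ℝ) + (w.length : ℝ) := by exact_mod_cast h2
  rw [abs_le]
  constructor <;> linarith

/-! ## the two directions -/

lemma backward {X : Set (ℤ → Bool)} (hX : IsSubshift X)
    (hfreqs : ∀ w : List Bool, (cylinder X w).Nonempty → ∃ δ : ℝ, 0 ≤ δ ∧ FreqTo X w δ) :
    ∃! μ : Measure (ℤ → Bool), InvariantProbOn X μ := by
  obtain ⟨x₀, hx₀⟩ := hX.1
  set x : ℕ → ℤ → Bool := fun _ => x₀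
  set ℓ : ℕ → ℕ := fun n => n + 1
  have hl : ∀ n, n + 1 ≤ ℓ n := fun n => le_rfl
  refine ⟨mu x ℓ, ⟨⟨mu_univ x ℓ hl⟩, mu_compl x ℓ hl hX.2.1 hX.2.2 fun _ => hx₀,
    mu_map_shift x ℓ hl⟩, fun ν hν => ?_⟩
  exact unique_inv hX hfreqs hν ⟨⟨mu_univ x ℓ hl⟩, mu_compl x ℓ hl hX.2.1 hX.2.2 fun _ => hx₀,
    mu_map_shift x ℓ hl⟩

lemma forward {X : Set (ℤ → Bool)} (hX : IsSubshift X)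
    (hUE : ∃! μ : Measure (ℤ → Bool), InvariantProbOn X μ) :
    ∀ w : List Bool, (cylinder X w).Nonempty → ∃ δ : ℝ, 0 ≤ δ ∧ FreqTo X w δ := by
  intro w hwne
  rcases Nat.eq_zero_or_pos w.length with h0 | h1
  · exact ⟨1, by norm_num, (List.length_eq_zero_iff.mp h0) ▸ freqTo_nil X⟩
  obtain ⟨μ, hμ, huniq⟩ := hUE
  haveI : IsProbabilityMeasure μ := hμ.1
  set δ := (μ (cylinder X w)).toReal with hδdef
  refine ⟨δ, ENNReal.toReal_nonneg, ?_⟩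
  by_contra hnot
  rw [FreqTo] at hnot
  push_neg at hnot
  obtain ⟨ε, hε, hN⟩ := hnot
  choose u hu1 hu2 hu3 using fun n : ℕ => hN (n + 1) (by omega)
  set x : ℕ → ℤ → Bool := fun n => (hu1 n).some with hxdef
  have hx : ∀ n, x n ∈ cylinder X (u n) := fun n => (hu1 n).some_mem
  set ℓ : ℕ → ℕ := fun n => (u n).length with hℓdef
  have hl : ∀ n, n + 1 ≤ ℓ n := hu2
  have hxX : ∀ n, x n ∈ X := fun n => (hx n).1
  set ν := mu x ℓ with hνdef
  have hνi : InvariantProbOn X ν :=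
    ⟨⟨mu_univ x ℓ hl⟩, mu_compl x ℓ hl hX.2.1 hX.2.2 hxX, mu_map_shift x ℓ hl⟩
  have hνμ : ν = μ := huniq ν hνi
  have hG : ν (cylinder X w) = ENNReal.ofReal (G x ℓ (cylSet 0 w)) := by
    rw [cylinder_eq, Set.inter_comm, measure_inter_conull hνi.2.1,
      mu_clopen x ℓ hl (isClopen_cylSet 0 w)]
  have htend : Tendsto (fun n => (occCount w (u n) : ℝ) / (ℓ n : ℝ)) (U : Filter ℕ)
      (𝓝 (G x ℓ (cylSet 0 w))) := by
    have hdiff : Tendsto (fun n => (occCount w (u n) : ℝ) / (ℓ n : ℝ) -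
        emp x ℓ n (cylSet 0 w)) (U : Filter ℕ) (𝓝 0) :=
      squeeze_zero_norm (fun n => emp_occ_abs hx h1 n) (tendsto_inv_ℓ ℓ hl w.length)
    have := hdiff.add (tendsto_emp x ℓ (cylSet 0 w))
    simpa using this
  have hmem : ε ≤ |G x ℓ (cylSet 0 w) - δ| := by
    have hclosed : IsClosed {t : ℝ | ε ≤ |t - δ|} :=
      isClosed_le continuous_const ((continuous_abs).comp (continuous_sub_right δ))
    exact hclosed.mem_of_tendsto htend (Eventually.of_forall fun n => hu3 n)
  have hμδ : μ (cylinder X w) = ENNReal.ofReal δ := by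
    rw [hδdef, ENNReal.ofReal_toReal (measure_lt_top μ _).ne]
  rw [hνμ, hμδ] at hG
  have : δ = G x ℓ (cylSet 0 w) :=
    (ENNReal.ofReal_eq_ofReal_iff ENNReal.toReal_nonneg (G_nonneg x ℓ _)).mp hG
  rw [← this] at hmem
  simp at hmem
  linarith


end UE

/-- A subshift is uniquely ergodic iff every word of its language has a uniform
frequency `δ ≥ 0` in all sufficiently long words of the language; moreover in that case
`δ` is the measure of the corresponding cylinder set under any invariant probability
measure on `X` (in particular under the unique one). -/
theorem uniquelyErgodic_iff_uniform_frequencies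
    (X : Set (ℤ → Bool)) (hX : IsSubshift X) :
    ((∃! μ : Measure (ℤ → Bool), InvariantProbOn X μ) ↔
      ∀ w : List Bool, (cylinder X w).Nonempty →
        ∃ δ : ℝ, 0 ≤ δ ∧ FreqTo X w δ) ∧
    ∀ μ : Measure (ℤ → Bool), InvariantProbOn X μ →
      ∀ (w : List Bool) (δ : ℝ), (cylinder X w).Nonempty → 0 ≤ δ → FreqTo X w δ →
        μ (cylinder X w) = ENNReal.ofReal δ := by
  constructor
  · constructor
    · exact fun hUE => UE.forward hX hUE
    · exact fun hfreqs => UE.backward hX hfreqs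
  · intro μ hμ w δ hne hδ hf
    exact UE.cyl_value hX hμ hne hδ hf
end

section
/- Let X ⊆ {0,1}^ℤ be a subshift and m ≥ 1 an integer with P_X(m+1) = P_X(m) + 1. Then there is exactly one word w ∈ L_m(X) such that both w0 and w1 (the words obtained by appending the letter 0, respectively 1, to w) belong to L_{m+1}(X). Moreover, if m' ≥ m and P_X(k+1) = P_X(k) + 1 for every k with m ≤ k ≤ m', and w' ∈ L_{m'}(X) is the unique word with both w'0, w'1 ∈ L_{m'+1}(X), then the rightmost subword of w' of length m equals w. -/
open MeasureTheory Filter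
open scoped ENNReal

lemma lang_finite (X : Set (ℤ → Bool)) (n : ℕ) : (lang X n).Finite := by
  apply Set.Finite.subset (Set.finite_range (fun f : Fin n → Bool => List.ofFn f))
  rintro w ⟨hw, -⟩
  refine ⟨fun i => w.get (i.cast hw.symm), ?_⟩
  apply List.ext_getElem
  · simp [hw]
  · intro i h1 h2
    simp

lemma tail_mem_lang {X : Set (ℤ → Bool)} (hX : shift '' X = X) {v : List Bool} {n : ℕ}
    (hv : v ∈ lang X n) : v.tail ∈ lang X (n - 1) := by
  obtain ⟨hlen, x, hxX, hx⟩ := hv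
  refine ⟨by simp [hlen], shift x, by rw [← hX]; exact ⟨x, hxX, rfl⟩, ?_⟩
  intro j
  have hj : (j : ℕ) + 1 < v.length := by
    have := j.2; simp [List.length_tail] at this; omega
  have h1 := hx ⟨(j : ℕ) + 1, hj⟩
  show x (((j:ℕ):ℤ) + 1) = v.tail.get j
  have h2 : v.tail.get j = v[(j:ℕ)+1] := by
    simp [List.getElem_tail]
  rw [h2, show ((j:ℕ):ℤ)+1 = (((j:ℕ)+1 : ℕ):ℤ) by push_cast; ring]
  exact h1

lemma drop_mem_lang {X : Set (ℤ → Bool)} (hX : shift '' X = X) {v : List Bool} {n : ℕ}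
    (hv : v ∈ lang X n) (k : ℕ) : v.drop k ∈ lang X (n - k) := by
  induction k with
  | zero => simpa using hv
  | succ k ih =>
      have h1 := tail_mem_lang hX ih
      rw [List.tail_drop] at h1
      have : n - (k+1) = n - k - 1 := by omega
      rw [this]
      exact h1

lemma dropLast_mem_lang {X : Set (ℤ → Bool)} {v : List Bool} {n : ℕ}
    (hv : v ∈ lang X (n+1)) : v.dropLast ∈ lang X n := by
  obtain ⟨hlen, x, hxX, hx⟩ := hv
  refine ⟨by simp [hlen], x, hxX, ?_⟩
  intro j
  have hj : (j:ℕ) < v.length := by have := j.2; simp at this; omega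
  have h1 := hx ⟨j, hj⟩
  simpa [List.getElem_dropLast] using h1

lemma exists_extension {X : Set (ℤ → Bool)} {v : List Bool} {n : ℕ}
    (hv : v ∈ lang X n) : ∃ a, v ++ [a] ∈ lang X (n+1) := by
  obtain ⟨hlen, x, hxX, hx⟩ := hv
  refine ⟨x n, by simp [hlen], x, hxX, ?_⟩
  intro j
  have hj : (j:ℕ) < n + 1 := by have := j.2; simpa [hlen] using this
  show x _ = (v ++ [x ((n:ℕ):ℤ)]).get j
  rcases Nat.lt_or_ge (j:ℕ) n with hlt | hge
  · have h2 : (v ++ [x ((n:ℕ):ℤ)]).get j = v[(j:ℕ)]'(by omega) := by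
      simp [List.getElem_append_left, hlen, hlt]
    rw [h2]
    exact hx ⟨j, by omega⟩
  · have hjn : (j:ℕ) = n := by omega
    have h2 : (v ++ [x ((n:ℕ):ℤ)]).get j = x ((n:ℕ):ℤ) := by
      have : (j:ℕ) = v.length := by omega
      simp [List.get_eq_getElem, this]
    rw [h2, show ((j:ℕ):ℤ) = ((n:ℕ):ℤ) by exact_mod_cast hjn]

lemma special_exists_unique {X : Set (ℤ → Bool)} {n : ℕ}
    (h : complexity X (n+1) = complexity X n + 1) :
    ∃! w : List Bool, w ∈ lang X n ∧
      w ++ [false] ∈ lang X (n+1) ∧ w ++ [true] ∈ lang X (n+1) := by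
  classical
  set e : List Bool → Bool := fun w => if w ++ [true] ∈ lang X (n+1) then true else false with he
  set φ : List Bool → List Bool := fun w => w ++ [e w] with hφ
  have hmem : ∀ w ∈ lang X n, φ w ∈ lang X (n+1) := by
    intro w hw
    by_cases ht : w ++ [true] ∈ lang X (n+1)
    · simp [hφ, he, ht]
    · obtain ⟨a, ha⟩ := exists_extension hw
      have ha' : a = false := by
        cases a
        · rfl
        · exact absurd ha ht
      simpa [hφ, he, ht, ha'] using ha
  have hinj : Set.InjOn φ (lang X n) := by
    intro w1 h1 w2 h2 heq
    exact (List.append_inj' heq rfl).1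
  -- existence
  have hex : ∃ w : List Bool, w ∈ lang X n ∧
      w ++ [false] ∈ lang X (n+1) ∧ w ++ [true] ∈ lang X (n+1) := by
    by_contra hno
    push_neg at hno
    have himg : φ '' lang X n = lang X (n+1) := by
      apply Set.Subset.antisymm
      · rintro v ⟨w, hw, rfl⟩; exact hmem w hw
      · intro v hv
        have hne : v ≠ [] := by
          intro hnil; rw [hnil] at hv; exact absurd hv.1 (by simp)
        have hvd : v.dropLast ++ [v.getLast hne] = v := List.dropLast_append_getLast hne
        have hwL : v.dropLast ∈ lang X n := dropLast_mem_lang hv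
        refine ⟨v.dropLast, hwL, ?_⟩
        have : e v.dropLast = v.getLast hne := by
          cases hg : v.getLast hne
          · have hft : v.dropLast ++ [false] ∈ lang X (n+1) := by rw [← hg, hvd]; exact hv
            have hnt : v.dropLast ++ [true] ∉ lang X (n+1) := fun ht =>
              hno v.dropLast hwL hft ht
            simp [he, hnt]
          · have hft : v.dropLast ++ [true] ∈ lang X (n+1) := by rw [← hg, hvd]; exact hv
            simp [he, hft]
        rw [hφ]; dsimp only; rw [this, hvd]
    have : complexity X (n+1) = complexity X n := by
      rw [complexity, ← himg, Set.ncard_image_of_injOn hinj]; rfl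
    omega
  obtain ⟨w, hw⟩ := hex
  refine ⟨w, hw, ?_⟩
  -- uniqueness
  intro y hy
  by_contra hne
  -- both w and y are special; derive cardinality contradiction
  have key : ∀ z, z ∈ lang X n → z ++ [false] ∈ lang X (n+1) → z ++ [true] ∈ lang X (n+1) →
      z ++ [!e z] ∈ lang X (n+1) ∧ z ++ [!e z] ∉ φ '' lang X n := by
    intro z hz hf ht
    constructor
    · cases hez : e z
      · simpa using ht
      · simpa using hf
    · rintro ⟨u, hu, huz⟩
      have := List.append_inj' huz rfl
      have h1 : u = z := this.1
      have h2 : e u = !e z := by simpa using this.2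
      rw [h1] at h2
      simp at h2
  obtain ⟨haw, haw'⟩ := key w hw.1 hw.2.1 hw.2.2
  obtain ⟨hay, hay'⟩ := key y hy.1 hy.2.1 hy.2.2
  have hab : y ++ [!e y] ≠ w ++ [!e w] := by
    intro hq
    exact hne (List.append_inj' hq rfl).1
  have hSsub : insert (y ++ [!e y]) (insert (w ++ [!e w]) (φ '' lang X n)) ⊆ lang X (n+1) := by
    intro v hv
    rcases hv with rfl | hv
    · exact hay
    rcases hv with rfl | ⟨u, hu, rfl⟩
    · exact haw
    · exact hmem _ hu
  have hfin : (φ '' lang X n).Finite := (lang_finite X n).image φ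
  have hc1 : (insert (w ++ [!e w]) (φ '' lang X n)).ncard = (φ '' lang X n).ncard + 1 :=
    Set.ncard_insert_of_notMem haw' hfin
  have hc2 : (insert (y ++ [!e y]) (insert (w ++ [!e w]) (φ '' lang X n))).ncard
      = (φ '' lang X n).ncard + 2 := by
    rw [Set.ncard_insert_of_notMem ?_ (hfin.insert _), hc1]
    simp only [Set.mem_insert_iff]
    push_neg
    exact ⟨hab, hay'⟩
  have hle := Set.ncard_le_ncard hSsub (lang_finite X (n+1))
  have himgc : (φ '' lang X n).ncard = complexity X n := Set.ncard_image_of_injOn hinj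
  rw [hc2, himgc] at hle
  have : complexity X (n+1) = (lang X (n+1)).ncard := rfl
  omega

/-- If `P_X(m+1) = P_X(m) + 1`, there is exactly one word `w` of length `m` in the
language of `X` such that both `w0` and `w1` are in the language; moreover if the
complexity increases by exactly one at every length between `m` and `m'`, the unique
such word `w'` of length `m'` ends with `w`. -/
theorem unique_right_special_word
    (X : Set (ℤ → Bool)) (hX : IsSubshift X) (m : ℕ) (hm : 1 ≤ m)
    (h : complexity X (m + 1) = complexity X m + 1) :
    (∃! w : List Bool, w ∈ lang X m ∧
        w ++ [false] ∈ lang X (m + 1) ∧ w ++ [true] ∈ lang X (m + 1)) ∧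
    ∀ m' : ℕ, m ≤ m' →
      (∀ k : ℕ, m ≤ k → k ≤ m' → complexity X (k + 1) = complexity X k + 1) →
      ∀ w w' : List Bool,
        (w ∈ lang X m ∧ w ++ [false] ∈ lang X (m + 1) ∧ w ++ [true] ∈ lang X (m + 1)) →
        (w' ∈ lang X m' ∧ w' ++ [false] ∈ lang X (m' + 1) ∧
          w' ++ [true] ∈ lang X (m' + 1)) →
        w'.drop (m' - m) = w := by
  have hshift : shift '' X = X := hX.2.2
  have hEU := special_exists_unique h
  refine ⟨hEU, ?_⟩
  intro m' hmm' _ w w' hw hw'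
  have hlen' : w'.length = m' := hw'.1.1
  have hkm : m' - m ≤ w'.length := by omega
  have hu : w'.drop (m' - m) ∈ lang X m := by
    have := drop_mem_lang hshift hw'.1 (m' - m)
    rwa [show m' - (m' - m) = m by omega] at this
  have huf : w'.drop (m' - m) ++ [false] ∈ lang X (m + 1) := by
    have := drop_mem_lang hshift hw'.2.1 (m' - m)
    rwa [List.drop_append_of_le_length hkm, show m' + 1 - (m' - m) = m + 1 by omega] at this
  have hut : w'.drop (m' - m) ++ [true] ∈ lang X (m + 1) := by
    have := drop_mem_lang hshift hw'.2.2 (m' - m)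
    rwa [List.drop_append_of_le_length hkm, show m' + 1 - (m' - m) = m + 1 by omega] at this
  exact hEU.unique ⟨hu, huf, hut⟩ hw
end

section
/- Let s, t ∈ {0,1}^L be distinct words of the same length L ≥ 1. Suppose there exist a word v with |v| ≤ L and an integer d with 0 ≤ d ≤ 2L − |v| such that for each pair (p,q) ∈ {s,t}×{s,t}, the word v occurs as a subword of the concatenation pq exactly once, namely starting at position d. Then every z ∈ {0,1}^ℤ that can be written as a bi-infinite concatenation of the words s and t can be written in a unique way as such a concatenation: if (c, (β_n)_{n∈ℤ}) and (c', (β'_n)_{n∈ℤ}) are two decompositions of z, then c ≡ c' (mod L) and, setting k = (c − c')/L, β'_{n+k} = β_n for all n ∈ ℤ. -/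
/-- `(c, β)` is a decomposition of `z ∈ {0,1}^ℤ` as a bi-infinite concatenation of the
words `s` and `t`, each of length `L`: `0 ≤ c < L`, each `β n ∈ {s,t}`, and
`z (c + nL + r) = (β n) r` for all `n ∈ ℤ`, `0 ≤ r < L`. -/
def IsDecomp (s t : List Bool) (L : ℕ) (z : ℤ → Bool) (c : ℤ) (β : ℤ → List Bool) :
    Prop :=
  0 ≤ c ∧ c < (L : ℤ) ∧ (∀ n : ℤ, β n = s ∨ β n = t) ∧
    ∀ (n : ℤ) (r : ℕ), r < L → z (c + n * L + r) = (β n).getD r false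

lemma getD_ext {a b : List Bool} (ha : a.length = b.length)
    (h : ∀ r, r < a.length → a.getD r false = b.getD r false) : a = b := by
  refine List.ext_getElem ha fun i h1 h2 => ?_
  have := h i h1
  rwa [List.getD_eq_getElem a false h1, List.getD_eq_getElem b false h2] at this

lemma occursAt_iff (v u : List Bool) (i : ℕ) :
    occursAt v u i ↔ i + v.length ≤ u.length ∧
      ∀ m, m < v.length → u.getD (i + m) false = v.getD m false := by
  constructor
  · rintro ⟨h1, h2⟩
    refine ⟨h1, fun m hm => ?_⟩
    have hm1 : m < ((u.drop i).take v.length).length := by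
      rw [h2]; exact hm
    have hm2 : i + m < u.length := by omega
    rw [List.getD_eq_getElem u false hm2, List.getD_eq_getElem v false hm]
    have key : ((u.drop i).take v.length)[m]'hm1 = u[i + m]'hm2 := by
      rw [List.getElem_take, List.getElem_drop]
    rw [← key]
    exact List.getElem_of_eq h2 hm1 ▸ rfl
  · rintro ⟨h1, h2⟩
    refine ⟨h1, ?_⟩
    have hlen : ((u.drop i).take v.length).length = v.length := by
      simp; omega
    refine List.ext_getElem hlen fun m hm1 hm2 => ?_
    have hm : m < v.length := by rwa [hlen] at hm1
    have hm3 : i + m < u.length := by omega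
    have := h2 m hm
    rw [List.getD_eq_getElem u false hm3, List.getD_eq_getElem v false hm] at this
    rw [List.getElem_take, List.getElem_drop]
    exact this

lemma window {s t : List Bool} {L : ℕ} {z : ℤ → Bool} {c : ℤ} {β : ℤ → List Bool}
    (hs : s.length = L) (ht : t.length = L)
    (hdec : IsDecomp s t L z c β) (n : ℤ) (r : ℕ) (hr : r < 2 * L) :
    z (c + n * L + r) = (β n ++ β (n + 1)).getD r false := by
  obtain ⟨_, _, hβ, hz⟩ := hdec
  have hlen : (β n).length = L := by rcases hβ n with h | h <;> rw [h] <;> assumption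
  have hlen1 : (β (n+1)).length = L := by rcases hβ (n+1) with h | h <;> rw [h] <;> assumption
  by_cases hrL : r < L
  · rw [hz n r hrL]
    have hr1 : r < (β n).length := by omega
    have hr2 : r < (β n ++ β (n+1)).length := by simp; omega
    rw [List.getD_eq_getElem _ false hr1, List.getD_eq_getElem _ false hr2,
      List.getElem_append_left]
  · have hm : r - L < L := by omega
    have key := hz (n + 1) (r - L) hm
    have harg : c + (n + 1) * L + ((r - L : ℕ) : ℤ) = c + n * L + r := by
      push_cast [Nat.cast_sub (le_of_not_gt hrL)]
      ring
    rw [harg] at key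
    rw [key]
    have hr1 : r - L < (β (n+1)).length := by omega
    have hr2 : r < (β n ++ β (n+1)).length := by simp; omega
    rw [List.getD_eq_getElem _ false hr1, List.getD_eq_getElem _ false hr2]
    rw [List.getElem_append_right (by omega)]
    congr 1
    omega

/-- Every occurrence of `v` in `z` is at a position of the form `c + n*L + d`. -/
lemma occ_position {L : ℕ} (hL : 1 ≤ L) {s t : List Bool}
    (hs : s.length = L) (ht : t.length = L)
    {v : List Bool} {d : ℕ} (hv : v.length ≤ L) (hd : d + v.length ≤ 2 * L)
    (hocc : ∀ p q : List Bool, (p = s ∨ p = t) → (q = s ∨ q = t) →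
      occursAt v (p ++ q) d ∧ ∀ i : ℕ, occursAt v (p ++ q) i → i = d)
    {z : ℤ → Bool} {c : ℤ} {β : ℤ → List Bool} (hdec : IsDecomp s t L z c β)
    {j : ℤ} (hj : ∀ m : ℕ, m < v.length → z (j + m) = v.getD m false) :
    ∃ n : ℤ, j = c + n * L + d := by
  have hLpos : (0 : ℤ) < L := by exact_mod_cast hL
  set n : ℤ := (j - c) / L with hn
  have hmod0 : 0 ≤ (j - c) % L := Int.emod_nonneg _ hLpos.ne'
  have hmodL : (j - c) % L < L := Int.emod_lt_of_pos _ hLpos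
  have hmod_def : (j - c) % L = j - c - L * n := Int.emod_def _ _
  set i : ℕ := ((j - c) % L).toNat with hi
  have hiz : ((i : ℤ)) = j - c - n * L := by
    rw [hi, Int.toNat_of_nonneg hmod0, hmod_def, mul_comm]
  have hiL : i < L := by omega
  have hβ := hdec.2.2.1
  have hlen : (β n).length = L := by rcases hβ n with h | h <;> rw [h] <;> assumption
  have hlen1 : (β (n+1)).length = L := by rcases hβ (n+1) with h | h <;> rw [h] <;> assumption
  have hoccur : occursAt v (β n ++ β (n + 1)) i := by
    rw [occursAt_iff]
    constructor
    · rw [List.length_append, hlen, hlen1]; omega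
    · intro m hm
      have hlt : i + m < 2 * L := by omega
      have := window hs ht hdec n (i + m) hlt
      have harg : c + n * L + ((i + m : ℕ) : ℤ) = j + m := by
        push_cast; omega
      rw [harg] at this
      rw [← this, hj m hm]
  have hid : i = d := (hocc (β n) (β (n+1)) (hβ n) (hβ (n+1))).2 i hoccur
  exact ⟨n, by omega⟩

/-- **Unique decipherability.** If `s ≠ t` are words of the same length `L ≥ 1` and
there are a word `v` with `|v| ≤ L` and a position `d` such that `v` occurs in each of
`ss`, `st`, `ts`, `tt` exactly once, namely at position `d`, then every bi-infinite
sequence that is a concatenation of `s`'s and `t`'s is so in a unique way. -/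
theorem unique_decipherability
    (L : ℕ) (hL : 1 ≤ L) (s t : List Bool)
    (hs : s.length = L) (ht : t.length = L) (hst : s ≠ t)
    (v : List Bool) (d : ℕ) (hv : v.length ≤ L) (hd : d + v.length ≤ 2 * L)
    (hocc : ∀ p q : List Bool, (p = s ∨ p = t) → (q = s ∨ q = t) →
      occursAt v (p ++ q) d ∧ ∀ i : ℕ, occursAt v (p ++ q) i → i = d) :
    ∀ (z : ℤ → Bool) (c c' : ℤ) (β β' : ℤ → List Bool),
      IsDecomp s t L z c β → IsDecomp s t L z c' β' →
      ∃ k : ℤ, c - c' = k * L ∧ ∀ n : ℤ, β' (n + k) = β n := by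
  intro z c c' β β' h1 h2
  have hβ' := h2.2.2.1
  -- v occurs in z at position c' + d, coming from the second decomposition
  have hoccz : ∀ m : ℕ, m < v.length → z ((c' + d) + m) = v.getD m false := by
    intro m hm
    have hlt : d + m < 2 * L := by omega
    have hw := window hs ht h2 0 (d + m) hlt
    have harg : c' + 0 * L + ((d + m : ℕ) : ℤ) = (c' + d) + m := by push_cast; ring
    rw [harg] at hw
    rw [hw]
    have hoc := (hocc (β' 0) (β' 1) (hβ' 0) (hβ' 1)).1
    rw [show ((0 : ℤ) + 1) = 1 by ring] at hw ⊢
    rw [occursAt_iff] at hoc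
    exact hoc.2 m hm
  obtain ⟨n, hn⟩ := occ_position hL hs ht hv hd hocc h1 hoccz
  -- c' + d = c + n * L + d, so c - c' = (-n) * L
  refine ⟨-n, by linarith [hn], ?_⟩
  intro m
  have hlenm : (β m).length = L := by
    rcases h1.2.2.1 m with h | h <;> rw [h] <;> assumption
  have hlenm' : (β' (m + -n)).length = L := by
    rcases hβ' (m + -n) with h | h <;> rw [h] <;> assumption
  refine getD_ext (by rw [hlenm, hlenm']) fun r hr => ?_
  rw [hlenm'] at hr
  have e1 := h1.2.2.2 m r hr
  have e2 := h2.2.2.2 (m + -n) r hr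
  have harg : c' + (m + -n) * L + (r : ℤ) = c + m * L + r := by
    have : c' = c + n * L := by linarith [hn]
    rw [this]; ring
  rw [harg] at e2
  rw [← e1, ← e2]
end

section
/- Let s, t ∈ {0,1}^L be distinct words of the same length L ≥ 1, and suppose there exist a word v with |v| ≤ L and an integer d with 0 ≤ d ≤ 2L − |v| such that for each pair (p,q) ∈ {s,t}×{s,t}, the word v occurs as a subword of pq exactly once, namely starting at position d. Let Y ⊆ {0,1}^ℤ be the set of all z that admit a decomposition as a bi-infinite concatenation of s and t. Then Y is a subshift and the topological entropy of (Y,σ) equals (log 2)/L; in particular it is positive. -/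
open MeasureTheory Filter
open scoped ENNReal

section AuxEntropy

open Set Uniformity UniformSpace Dynamics

namespace CSE

lemma shift_iter (k : ℕ) (x : ℤ → Bool) (i : ℤ) : shift^[k] x i = x (i + k) := by
  induction k generalizing x i with
  | zero => simp
  | succ k ih =>
    rw [Function.iterate_succ_apply, ih]
    show x (i + k + 1) = x (i + (k + 1 : ℕ))
    congr 1; push_cast; ring

def E (i : ℤ) : Set ((ℤ → Bool) × (ℤ → Bool)) := {p | p.1 i = p.2 i}

lemma unif_eq : 𝓤 (ℤ → Bool) = ⨅ i : ℤ, 𝓟 (E i) := by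
  rw [Pi.uniformity]
  congr 1; funext i
  rw [show 𝓤 Bool = 𝓟 SetRel.id from rfl, Filter.comap_principal]
  ext p; simp [E, SetRel.id]

lemma E_mem (i : ℤ) : E i ∈ 𝓤 (ℤ → Bool) := by
  rw [unif_eq]; exact mem_iInf_of_mem i (Filter.mem_principal_self _)

def phi (s t : List Bool) (L : ℕ) (c : ℤ) (b : ℤ → Bool) : ℤ → Bool :=
  fun i => (if b ((i - c) / L) then s else t).getD ((i - c) % L).toNat false

lemma phi_spec (s t : List Bool) (L : ℕ) (hL : 1 ≤ L) (c : ℤ) (b : ℤ → Bool)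
    (k : ℤ) (r : ℕ) (hr : r < L) :
    phi s t L c b (c + k * L + r) = (if b k then s else t).getD r false := by
  have hL0 : (L : ℤ) ≠ 0 := by exact_mod_cast Nat.pos_of_ne_zero (by omega) |>.ne'
  have h1 : (c + k * L + r - c) = (r : ℤ) + k * L := by ring
  unfold phi
  rw [h1, Int.add_mul_ediv_right _ _ hL0, Int.add_mul_emod_self_right]
  rw [Int.ediv_eq_zero_of_lt (by positivity) (by exact_mod_cast hr), zero_add,
    Int.emod_eq_of_lt (by positivity) (by exact_mod_cast hr), Int.toNat_natCast]

lemma phi_mem {s t : List Bool} {L : ℕ} (hL : 1 ≤ L) (c : ℤ) (h0 : 0 ≤ c) (h1 : c < (L:ℤ)) (b : ℤ → Bool) :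
    phi s t L c b ∈ {z | ∃ c β, IsDecomp s t L z c β} := by
  refine ⟨c, fun k => if b k then s else t, h0, h1, fun k => by by_cases h : b k <;> simp [h], ?_⟩
  intro k r hr
  rw [phi_spec s t L hL c b k r hr]

lemma exists_diff (s t : List Bool) (L : ℕ) (hs : s.length = L) (ht : t.length = L)
    (hst : s ≠ t) : ∃ r : ℕ, r < L ∧ s.getD r false ≠ t.getD r false := by
  by_contra h
  push_neg at h
  apply hst
  apply List.ext_getElem (hs.trans ht.symm)
  intro r h1 h2
  have := h r (by omega)
  rwa [List.getD_eq_getElem s false h1, List.getD_eq_getElem t false h2] at this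

/-- extension of a finite block pattern to `ℤ`. -/
def bext (M : ℕ) (w : Fin M → Bool) : ℤ → Bool :=
  fun k => if h : 0 ≤ k ∧ k.toNat < M then w ⟨k.toNat, h.2⟩ else true

lemma bext_spec (M : ℕ) (w : Fin M → Bool) (j : Fin M) : bext M w (j : ℕ) = w j := by
  unfold bext
  rw [dif_pos ⟨Int.natCast_nonneg _, by simp [Int.toNat_natCast, j.2]⟩]
  exact congrArg w (Fin.ext (by simp))

lemma net_eval {s t : List Bool} {L : ℕ} (hL : 1 ≤ L) (M : ℕ) (w : Fin M → Bool)
    (j : Fin M) (r : ℕ) (hr : r < L) :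
    phi s t L 0 (bext M w) (((j : ℕ) * L + r : ℕ)) =
      (if w j then s else t).getD r false := by
  have h := phi_spec s t L hL 0 (bext M w) (j : ℕ) r hr
  rw [bext_spec] at h
  rw [← h]
  congr 1
  push_cast
  ring

lemma net_sep {s t : List Bool} {L : ℕ} (hL : 1 ≤ L) (hs : s.length = L)
    (ht : t.length = L) (hst : s ≠ t) (M : ℕ) (w w' : Fin M → Bool) (hww : w ≠ w') :
    ∃ p : ℕ, p < M * L ∧ phi s t L 0 (bext M w) p ≠ phi s t L 0 (bext M w') p := by
  obtain ⟨j, hj⟩ := Function.ne_iff.1 hww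
  obtain ⟨r, hrL, hrd⟩ := exists_diff s t L hs ht hst
  refine ⟨(j : ℕ) * L + r, ?_, ?_⟩
  · have := j.2
    nlinarith [j.2, hrL]
  · rw [net_eval hL M w j r hrL, net_eval hL M w' j r hrL]
    cases hwj : w j <;> cases hwj' : w' j
    · exact absurd (hwj.trans hwj'.symm) hj
    · simp only [Bool.false_eq_true, if_false, if_true]
      exact fun hh => hrd hh.symm
    · simp only [Bool.false_eq_true, if_false, if_true]
      exact hrd
    · exact absurd (hwj.trans hwj'.symm) hj

lemma mem_ball_iff (x ζ : ℤ → Bool) (n : ℕ) :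
    ζ ∈ ball x (dynEntourage shift (E 0) n) ↔ ∀ k < n, x (k : ℤ) = ζ (k : ℤ) := by
  rw [ball, mem_preimage]
  rw [show ((x, ζ) ∈ dynEntourage shift (E 0) n) ↔ _ from mem_dynEntourage]
  constructor
  · intro h k hk
    have := h k hk
    simp only [E, mem_setOf_eq, shift_iter] at this
    simpa using this
  · intro h k hk
    simp only [E, mem_setOf_eq, shift_iter]
    simpa using h k hk

lemma lower_netMaxcard {s t : List Bool} {L : ℕ} (hL : 1 ≤ L) (hs : s.length = L)
    (ht : t.length = L) (hst : s ≠ t) (M : ℕ) :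
    (2 ^ M : ℕ∞) ≤ netMaxcard shift {z | ∃ c β, IsDecomp s t L z c β} (E 0) (M * L) := by
  classical
  set Y := {z | ∃ c β, IsDecomp s t L z c β} with hY
  have hL0 : (0:ℤ) < L := by exact_mod_cast Nat.pos_of_ne_zero (by omega)
  set g : (Fin M → Bool) → (ℤ → Bool) := fun w => phi s t L 0 (bext M w) with hg
  have hginj : Function.Injective g := by
    intro w w' h
    by_contra hww
    obtain ⟨p, _, hne⟩ := net_sep hL hs ht hst M w w' hww
    exact hne (by rw [hg] at h; exact congrFun h p)
  set S : Finset (ℤ → Bool) := Finset.image g Finset.univ with hS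
  have hnet : IsDynNetIn shift Y (E 0) (M * L) (S : Set (ℤ → Bool)) := by
    constructor
    · intro x hx
      simp only [hS, Finset.coe_image, Set.mem_image] at hx
      obtain ⟨w, _, rfl⟩ := hx
      exact phi_mem hL 0 le_rfl hL0 _
    · intro x hx y hy hxy
      simp only [hS, Finset.coe_image, Set.mem_image] at hx hy
      obtain ⟨w, _, rfl⟩ := hx
      obtain ⟨w', _, rfl⟩ := hy
      have hww : w ≠ w' := fun h => hxy (by rw [h])
      obtain ⟨p, hp, hne⟩ := net_sep hL hs ht hst M w w' hww
      rw [Function.onFun]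
      rw [Set.disjoint_left]
      intro ζ h1 h2
      rw [mem_ball_iff] at h1 h2
      exact hne ((h1 p hp).trans (h2 p hp).symm)
  have hcard : S.card = 2 ^ M := by
    rw [hS, Finset.card_image_of_injective _ hginj, Finset.card_univ, Fintype.card_fun]
    simp
  calc (2^M : ℕ∞) = (S.card : ℕ∞) := by rw [hcard]; push_cast; ring
    _ ≤ _ := hnet.card_le_netMaxcard

lemma lower_bound {s t : List Bool} {L : ℕ} (hL : 1 ≤ L) (hs : s.length = L)
    (ht : t.length = L) (hst : s ≠ t) :
    ((Real.log 2 / L : ℝ) : EReal) ≤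
      coverEntropy shift {z | ∃ c β, IsDecomp s t L z c β} := by
  set Y := {z | ∃ c β, IsDecomp s t L z c β} with hY
  refine le_trans ?_ (netEntropyEntourage_le_coverEntropy shift Y (E_mem 0))
  rw [netEntropyEntourage]
  apply le_limsup_of_frequently_le ?_ (by isBoundedDefault)
  rw [Filter.frequently_atTop]
  intro N
  set M := max N 1 with hM
  have hM1 : 1 ≤ M := le_max_right _ _
  have hNM : N ≤ M * L := by
    have h1 : N ≤ M := le_max_left _ _
    have h2 : M ≤ M * L := Nat.le_mul_of_pos_right M (by omega)
    omega
  refine ⟨M * L, hNM, ?_⟩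
  have hkey := lower_netMaxcard hL hs ht hst (L := L) M
  have hlog : ((M * Real.log 2 : ℝ) : EReal) ≤
      ENNReal.log (netMaxcard shift Y (E 0) (M * L)) := by
    calc ((M * Real.log 2 : ℝ) : EReal) = ENNReal.log ((2:ℝ≥0∞) ^ M) := by
          rw [ENNReal.log_pow]
          rw [show (2:ℝ≥0∞) = ENNReal.ofReal 2 by simp,
            ENNReal.log_ofReal_of_pos (by norm_num)]
          norm_cast
      _ ≤ _ := by
          apply ENNReal.log_monotone
          have := ENat.toENNReal_mono hkey
          rw [ENat.toENNReal_pow] at this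
          exact_mod_cast this
  have hML0 : (0:ℝ) < (M * L : ℕ) := by positivity
  calc ((Real.log 2 / L : ℝ) : EReal)
      = ((M * Real.log 2 : ℝ) : EReal) / ((M * L : ℕ) : EReal) := by
        rw [show ((M * L : ℕ) : EReal) = (((M * L : ℕ) : ℝ) : EReal) by exact_mod_cast rfl,
          ← EReal.coe_div]
        congr 1
        have hM0 : (M:ℝ) ≠ 0 := by positivity
        have hL0 : (L:ℝ) ≠ 0 := by positivity
        push_cast
        field_simp
    _ ≤ _ := EReal.monotone_div_right_of_nonneg (Nat.cast_nonneg' _) hlog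
def W (m : ℕ) : Set ((ℤ → Bool) × (ℤ → Bool)) :=
  {p | ∀ i : ℤ, i.natAbs ≤ m → p.1 i = p.2 i}

lemma W_mem (m : ℕ) : W m ∈ 𝓤 (ℤ → Bool) := by
  have h : W m = ⋂ i ∈ (Finset.Icc (-(m:ℤ)) m : Set ℤ), E i := by
    ext p
    simp only [W, E, mem_setOf_eq, mem_iInter, Finset.coe_Icc, Set.mem_Icc, Finset.mem_Icc]
    constructor
    · intro h i hi; exact h i (by omega)
    · intro h i hi; exact h i (by omega)
  rw [h]
  exact (Filter.biInter_mem (Finset.finite_toSet _)).2 fun i _ => E_mem i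

lemma exists_W_subset {U : Set ((ℤ → Bool) × (ℤ → Bool))} (hU : U ∈ 𝓤 (ℤ → Bool)) :
    ∃ m : ℕ, W m ⊆ U := by
  rw [unif_eq] at hU
  obtain ⟨T, T_fin, hsub⟩ := (Filter.hasBasis_iInf_principal_finite E).mem_iff.1 hU
  obtain ⟨m, hm⟩ : ∃ m : ℕ, ∀ i ∈ T, i.natAbs ≤ m := by
    rcases (T_fin.image Int.natAbs).bddAbove with ⟨m, hm⟩
    exact ⟨m, fun i hi => hm (Set.mem_image_of_mem _ hi)⟩
  exact ⟨m, fun p hp => hsub (mem_iInter₂.2 fun i hi => hp i (hm i hi))⟩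


lemma phi_local (s t : List Bool) (L : ℕ) (c : ℤ) (b b' : ℤ → Bool) (i : ℤ)
    (h : b ((i - c) / L) = b' ((i - c) / L)) :
    phi s t L c b i = phi s t L c b' i := by
  unfold phi; rw [h]


lemma mem_phi (hL : 1 ≤ L) (hst : s ≠ t) {z : ℤ → Bool}
    (hz : z ∈ {z | ∃ c β, IsDecomp s t L z c β}) :
    ∃ c : ℤ, 0 ≤ c ∧ c < (L:ℤ) ∧ ∃ b : ℤ → Bool, z = phi s t L c b := by
  obtain ⟨c, β, h0, h1, hβ, hzz⟩ := hz
  have hL0 : (0:ℤ) < L := by exact_mod_cast Nat.pos_of_ne_zero (by omega)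
  refine ⟨c, h0, h1, fun k => decide (β k = s), ?_⟩
  funext i
  set k := (i - c) / (L:ℤ) with hk
  set r := (i - c) % (L:ℤ) with hr
  have hr0 : 0 ≤ r := Int.emod_nonneg _ hL0.ne'
  have hrL : r < L := Int.emod_lt_of_pos _ hL0
  have hieq : i = c + k * L + (r.toNat : ℤ) := by
    rw [Int.toNat_of_nonneg hr0]
    have h2 := Int.mul_ediv_add_emod (i - c) (L:ℤ)
    rw [← hk, ← hr] at h2
    have h3 : k * (L:ℤ) = (L:ℤ) * k := mul_comm _ _
    omega
  have hrn : r.toNat < L := by omega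
  rw [hieq, hzz k r.toNat hrn, phi_spec s t L hL c _ k r.toNat hrn]
  rcases hβ k with h | h
  · rw [h]; simp
  · rw [h]
    have : decide (β k = s) = false := by
      simp only [decide_eq_false_iff_not, h]
      exact fun hc => hst (hc.symm)
    rw [h] at this
    simp [this]

lemma Y_eq (hL : 1 ≤ L) (hst : s ≠ t) :
    {z | ∃ c β, IsDecomp s t L z c β} =
      ⋃ c : Fin L, Set.range (phi s t L (c : ℕ)) := by
  ext z
  constructor
  · intro hz
    obtain ⟨c, h0, h1, b, hb⟩ := mem_phi hL hst hz
    refine mem_iUnion.2 ⟨⟨c.toNat, by omega⟩, ⟨b, ?_⟩⟩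
    rw [hb]
    simp [Int.toNat_of_nonneg h0]
  · intro hz
    obtain ⟨c, b, hb⟩ := mem_iUnion.1 hz
    rw [← hb]
    exact phi_mem hL _ (by positivity) (by exact_mod_cast c.2) b

lemma phi_continuous (c : ℤ) : Continuous (phi s t L c) := by
  apply continuous_pi
  intro i
  exact Continuous.comp (continuous_of_discreteTopology
    (f := fun x : Bool => (if x then s else t).getD ((i - c) % L).toNat false))
    (continuous_apply ((i - c) / L))

lemma Y_compact (hL : 1 ≤ L) (hst : s ≠ t) :
    IsCompact {z | ∃ c β, IsDecomp s t L z c β} := by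
  rw [Y_eq hL hst]
  exact isCompact_iUnion fun c => isCompact_range (phi_continuous _)

lemma Y_subshift (hL : 1 ≤ L) (hst : s ≠ t) :
    IsSubshift {z | ∃ c β, IsDecomp s t L z c β} := by
  set Y := {z | ∃ c β, IsDecomp s t L z c β} with hY
  have hL0 : (0:ℤ) < L := by exact_mod_cast Nat.pos_of_ne_zero (by omega)
  refine ⟨⟨phi s t L 0 (fun _ => true), phi_mem hL 0 le_rfl hL0 _⟩,
    (Y_compact hL hst).isClosed, ?_⟩
  apply Set.Subset.antisymm
  · rintro _ ⟨z, ⟨c, β, h0, h1, hβ, hz⟩, rfl⟩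
    by_cases hc : 1 ≤ c
    · refine ⟨c - 1, β, by omega, by omega, hβ, fun k r hr => ?_⟩
      show z (c - 1 + k * L + r + 1) = _
      rw [show c - 1 + k * L + r + 1 = c + k * L + r by ring]
      exact hz k r hr
    · have hc0 : c = 0 := by omega
      refine ⟨L - 1, fun k => β (k + 1), by omega, by omega, fun k => hβ (k+1),
        fun k r hr => ?_⟩
      show z ((L:ℤ) - 1 + k * L + r + 1) = _
      rw [show (L:ℤ) - 1 + k * L + r + 1 = c + (k + 1) * L + r by
        have : (k+1) * (L:ℤ) = k * L + L := by ring
        omega]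
      exact hz (k+1) r hr
  · rintro z ⟨c, β, h0, h1, hβ, hz⟩
    refine ⟨fun i => z (i - 1), ?_, by funext i; simp [shift]⟩
    by_cases hc : c + 1 < L
    · refine ⟨c + 1, β, by omega, by omega, hβ, fun k r hr => ?_⟩
      show z (c + 1 + k * L + r - 1) = _
      rw [show c + 1 + k * L + r - 1 = c + k * L + r by ring]
      exact hz k r hr
    · have hc0 : c = (L:ℤ) - 1 := by omega
      refine ⟨0, fun k => β (k - 1), le_rfl, hL0, fun k => hβ (k-1), fun k r hr => ?_⟩
      show z (0 + k * L + r - 1) = _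
      rw [show (0:ℤ) + k * L + r - 1 = c + (k - 1) * L + r by
        have : (k-1) * (L:ℤ) = k * L - L := by ring
        omega]
      exact hz (k-1) r hr

lemma log_natCast (N : ℕ) (hN : 1 ≤ N) :
    ENNReal.log ((N : ℝ≥0∞)) = ((Real.log N : ℝ) : EReal) := by
  rw [show ((N:ℕ):ℝ≥0∞) = ENNReal.ofReal N by rw [ENNReal.ofReal_natCast]]
  rw [ENNReal.log_ofReal_of_pos (by exact_mod_cast Nat.pos_of_ne_zero (by omega))]

lemma cover_card {s t : List Bool} {L : ℕ} (hL : 1 ≤ L) (hst : s ≠ t) (m n : ℕ) :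
    coverMincard shift {z | ∃ c β, IsDecomp s t L z c β} (W m) n ≤
      ((L * 2 ^ ((n + 2 * m) / L + 2) : ℕ) : ℕ∞) := by
  classical
  set Y := {z | ∃ c β, IsDecomp s t L z c β} with hY
  have hL0 : (0:ℤ) < L := by exact_mod_cast Nat.pos_of_ne_zero (by omega)
  set B := (n + 2 * m) / L + 2 with hB
  set kmin : ℤ → ℤ := fun c => (-(m:ℤ) - c) / L with hkmin
  set wext : ℤ → (Fin B → Bool) → (ℤ → Bool) := fun c w k =>
    if h : 0 ≤ k - kmin c ∧ (k - kmin c).toNat < B then w ⟨(k - kmin c).toNat, h.2⟩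
    else true with hwext
  set g : (Fin L × (Fin B → Bool)) → (ℤ → Bool) := fun p =>
    phi s t L ((p.1 : ℕ) : ℤ) (wext ((p.1 : ℕ) : ℤ) p.2) with hg
  set S : Finset (ℤ → Bool) := Finset.image g Finset.univ with hS
  have hcover : IsDynCoverOf shift Y (W m) n (S : Set (ℤ → Bool)) := by
    intro z hz
    obtain ⟨c, h0, h1, b, rfl⟩ := mem_phi hL hst hz
    set c' : Fin L := ⟨c.toNat, by omega⟩ with hc'
    have hcc : ((c' : ℕ) : ℤ) = c := by simp [hc', Int.toNat_of_nonneg h0]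
    set w : Fin B → Bool := fun j => b (kmin c + j) with hw
    -- window agreement
    have hwin : ∀ i : ℤ, -(m:ℤ) ≤ i → i ≤ (m:ℤ) + n - 1 →
        g (c', w) i = phi s t L c b i := by
      intro i him hiM
      rw [hg]
      simp only
      rw [hcc]
      apply phi_local
      set k := (i - c) / (L:ℤ) with hk
      have hkmin_le : kmin c ≤ k := Int.ediv_le_ediv hL0 (by omega)
      have hkB : k - kmin c < B := by
        have h5 : -(m:ℤ) - c < (kmin c + 1) * L := Int.lt_ediv_add_one_mul_self _ hL0
        have hBL : ((B:ℤ) - 1) * L ≥ (n:ℤ) + 2*m + 1 := by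
          have hq := Nat.div_add_mod (n + 2*m) L
          have hq2 : (n + 2*m) % L < L := Nat.mod_lt _ (by omega)
          have hexp : ((B:ℤ) - 1) * L = ((n + 2*m)/L : ℕ) * L + L := by
            rw [hB]; push_cast; ring
          rw [hexp]
          have : (L:ℤ) * ((n + 2*m)/L : ℕ) + ((n + 2*m) % L : ℕ) = (n:ℤ) + 2*m := by
            exact_mod_cast congrArg (Nat.cast : ℕ → ℤ) hq
          have hc2 : ((n + 2*m)/L : ℕ) * (L:ℤ) = (L:ℤ) * ((n + 2*m)/L : ℕ) := mul_comm _ _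
          omega
        have hklt : k < kmin c + B := by
          rw [hk]
          rw [Int.ediv_lt_iff_lt_mul hL0]
          have hsplit : (kmin c + B) * (L:ℤ) = (kmin c + 1) * L + ((B:ℤ) - 1) * L := by ring
          omega
        omega
      have h0k : 0 ≤ k - kmin c := by omega
      rw [hwext]
      simp only
      have htn : (k - kmin c).toNat < B := by omega
      rw [dif_pos ⟨h0k, htn⟩, hw]
      simp only
      congr 1
      push_cast [Int.toNat_of_nonneg h0k]
      ring
    -- ball membership
    refine ⟨g (c', w), Finset.mem_coe.2 (Finset.mem_image.2 ⟨(c', w), Finset.mem_univ _, rfl⟩), ?_⟩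
    rw [mem_dynEntourage]
    intro k hk
    intro i hi
    simp only
    rw [shift_iter, shift_iter]
    exact (hwin (i + k) (by omega) (by omega)).symm
  have hcard : S.card ≤ L * 2 ^ B := by
    calc S.card ≤ Fintype.card (Fin L × (Fin B → Bool)) := by
          rw [hS]
          exact le_trans (Finset.card_image_le) (le_of_eq (Finset.card_univ))
      _ = L * 2 ^ B := by simp [Fintype.card_fun]
  calc coverMincard shift Y (W m) n ≤ (S.card : ℕ∞) := hcover.coverMincard_le_card
    _ ≤ _ := by exact_mod_cast hcard

lemma upper_bound {s t : List Bool} {L : ℕ} (hL : 1 ≤ L) (hst : s ≠ t) :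
    coverEntropy shift {z | ∃ c β, IsDecomp s t L z c β} ≤
      ((Real.log 2 / L : ℝ) : EReal) := by
  set Y := {z | ∃ c β, IsDecomp s t L z c β} with hY
  refine iSup₂_le fun U hU => ?_
  obtain ⟨m, hm⟩ := exists_W_subset hU
  refine le_trans (coverEntropyEntourage_antitone shift Y hm) ?_
  show atTop.limsup (fun n : ℕ => ENNReal.log (coverMincard shift Y (W m) n) / (n : EReal)) ≤ _
  set A : ℕ := L * 2 ^ (2*m/L + 3) with hA
  have hA1 : 1 ≤ A := by
    rw [hA]; exact Nat.one_le_iff_ne_zero.2 (by positivity)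
  -- pointwise bound for n ≥ 1
  have hpt : ∀ n : ℕ, 1 ≤ n →
      ENNReal.log (coverMincard shift Y (W m) n) / (n : EReal) ≤
        ((Real.log A / n + Real.log 2 / L : ℝ) : EReal) := by
    intro n hn
    have hcm := cover_card hL hst (L := L) (s := s) (t := t) m n
    have hNle : (L * 2 ^ ((n + 2 * m) / L + 2) : ℕ) ≤ A * 2 ^ (n / L) := by
      have hdiv : (n + 2*m)/L ≤ n/L + (2*m)/L + 1 := by
        rw [Nat.add_div (show 0 < L by omega)]
        split <;> omega
      calc (L * 2 ^ ((n + 2 * m) / L + 2) : ℕ)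
          ≤ L * 2 ^ (n/L + (2*m)/L + 3) := by
            apply Nat.mul_le_mul_left
            exact Nat.pow_le_pow_right (by omega) (by omega)
        _ = A * 2 ^ (n / L) := by rw [hA]; ring
    have hlogle : ENNReal.log (coverMincard shift Y (W m) n) ≤
        ((Real.log ((A * 2 ^ (n/L) : ℕ) : ℝ) : ℝ) : EReal) := by
      rw [← log_natCast (A * 2 ^ (n/L)) (Nat.one_le_iff_ne_zero.2 (by positivity))]
      apply ENNReal.log_monotone
      have h7 : coverMincard shift Y (W m) n ≤ ((A * 2 ^ (n/L) : ℕ) : ℕ∞) :=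
        le_trans hcm (by exact_mod_cast hNle)
      have := ENat.toENNReal_mono h7
      rwa [ENat.toENNReal_coe] at this
    have hreal : Real.log ((A * 2 ^ (n/L) : ℕ) : ℝ) / n ≤ Real.log A / n + Real.log 2 / L := by
      have hA0 : (0:ℝ) < A := by exact_mod_cast Nat.pos_of_ne_zero (by omega)
      have hn0 : (0:ℝ) < n := by exact_mod_cast Nat.pos_of_ne_zero (by omega)
      have hL0 : (0:ℝ) < L := by exact_mod_cast Nat.pos_of_ne_zero (by omega)
      have hcast2 : ((A * 2 ^ (n / L) : ℕ) : ℝ) = (A:ℝ) * (2:ℝ)^(n/L) := by push_cast; ring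
      rw [hcast2, Real.log_mul (ne_of_gt hA0) (by positivity), Real.log_pow]
      rw [div_le_iff₀ hn0] at *
      have hcast : ((n/L : ℕ) : ℝ) ≤ (n:ℝ) / L := Nat.cast_div_le
      have hlog2 : (0:ℝ) ≤ Real.log 2 := Real.log_nonneg (by norm_num)
      have : ((n/L : ℕ) : ℝ) * Real.log 2 ≤ (n:ℝ) / L * Real.log 2 :=
        mul_le_mul_of_nonneg_right hcast hlog2
      have hexp : (Real.log A / n + Real.log 2 / L) * n = Real.log A + (n:ℝ)/L * Real.log 2 := by
        field_simp
      rw [hexp]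
      linarith
    calc ENNReal.log (coverMincard shift Y (W m) n) / (n : EReal)
        ≤ ((Real.log ((A * 2 ^ (n/L) : ℕ) : ℝ) : ℝ) : EReal) / (n : EReal) :=
          EReal.monotone_div_right_of_nonneg (Nat.cast_nonneg' _) hlogle
      _ = ((Real.log ((A * 2 ^ (n/L) : ℕ) : ℝ) / n : ℝ) : EReal) := by
          rw [show ((n:ℕ) : EReal) = (((n:ℕ):ℝ) : EReal) by exact_mod_cast rfl, ← EReal.coe_div]
      _ ≤ _ := by exact_mod_cast hreal
  -- limit
  have hlim : Tendsto (fun n : ℕ => ((Real.log A / n + Real.log 2 / L : ℝ) : EReal))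
      atTop (nhds ((Real.log 2 / L : ℝ) : EReal)) := by
    rw [EReal.tendsto_coe]
    have := (tendsto_const_div_atTop_nhds_zero_nat (Real.log A)).add_const (Real.log 2 / L)
    simpa using this
  calc atTop.limsup (fun n : ℕ => ENNReal.log (coverMincard shift Y (W m) n) / (n : EReal))
      ≤ atTop.limsup (fun n : ℕ => ((Real.log A / n + Real.log 2 / L : ℝ) : EReal)) := by
        refine limsup_le_limsup ?_ (by isBoundedDefault) (by isBoundedDefault)
        filter_upwards [eventually_ge_atTop 1] with n hn
        exact hpt n hn
    _ = ((Real.log 2 / L : ℝ) : EReal) := hlim.limsup_eq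

end CSE

end AuxEntropy

/-- Under the unique-decipherability hypotheses on `s` and `t`, the set `Y` of all
bi-infinite concatenations of `s` and `t` is a subshift whose topological entropy is
`(log 2)/L`; in particular it is positive. -/
theorem concatenation_shift_entropy
    (L : ℕ) (hL : 1 ≤ L) (s t : List Bool)
    (hs : s.length = L) (ht : t.length = L) (hst : s ≠ t)
    (v : List Bool) (d : ℕ) (hv : v.length ≤ L) (hd : d + v.length ≤ 2 * L)
    (hocc : ∀ p q : List Bool, (p = s ∨ p = t) → (q = s ∨ q = t) →
      occursAt v (p ++ q) d ∧ ∀ i : ℕ, occursAt v (p ++ q) i → i = d) :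
    IsSubshift {z | ∃ c β, IsDecomp s t L z c β} ∧
    Dynamics.coverEntropy shift {z | ∃ c β, IsDecomp s t L z c β} =
      ((Real.log 2 / L : ℝ) : EReal) ∧
    0 < Dynamics.coverEntropy shift {z | ∃ c β, IsDecomp s t L z c β} := by
  have hent : Dynamics.coverEntropy shift {z | ∃ c β, IsDecomp s t L z c β} =
      ((Real.log 2 / L : ℝ) : EReal) :=
    le_antisymm (CSE.upper_bound hL hst) (CSE.lower_bound hL hs ht hst)
  refine ⟨CSE.Y_subshift hL hst, hent, ?_⟩
  rw [hent]
  have h2 : (0:ℝ) < Real.log 2 / L := by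
    apply div_pos (Real.log_pos (by norm_num))
    exact_mod_cast Nat.pos_of_ne_zero (by omega)
  exact_mod_cast EReal.coe_pos.2 h2
end
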